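/- arXiv:math/0607795 — 7 statements merged into one kernel-verified Lean document; each statement's English description precedes it below -/
import Mathlib

section
/- Let 1 ≤ q ≤ p < ∞ and let (x_i)_{i≥1}, (y_j)_{j≥1} be nonincreasing sequences of nonnegative reals. Then the ℓ-type Lorentz quantity satisfies submultiplicativity over tensor products: if (z_k)_{k≥1} denotes the nonincreasing rearrangement of the doubly-indexed family (x_i · y_j)_{i,j≥1}, then (∑_{k=1}^∞ z_k^q / k^{1 - q/p})^{1/q} ≤ (∑_{i=1}^∞ x_i^q / i^{1 - q/p})^{1/q} · (∑_{j=1}^∞ y_j^q / j^{1 - q/p})^{1/q}. -/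
open Finset ENNReal
open scoped ENNReal NNReal

/-- Sum comparison over a finite "lower set" in ℕ × ℕ. -/
lemma lorentz_lower_sum (f : ℕ → ℝ≥0∞) (hf : Antitone f) :
    ∀ S : Finset (ℕ × ℕ), (∀ p ∈ S, ∀ r : ℕ × ℕ, r.1 ≤ p.1 → r.2 ≤ p.2 → r ∈ S) →
    ∑ k ∈ range S.card, f (k + 1) ≤ ∑ p ∈ S, f ((p.1 + 1) * (p.2 + 1)) := by
  intro S
  induction S using Finset.strongInduction with
  | _ S ih =>
    intro hS
    rcases S.eq_empty_or_nonempty with rfl | hne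
    · simp
    obtain ⟨P, hP, hmax⟩ := S.exists_max_image (fun p => p.1 + p.2) hne
    -- every element has product ≤ card S
    have hprod : ∀ p ∈ S, (p.1 + 1) * (p.2 + 1) ≤ S.card := by
      intro p hp
      have hsub : (range (p.1 + 1)) ×ˢ (range (p.2 + 1)) ⊆ S := by
        intro r hr
        simp only [mem_product, mem_range, Nat.lt_succ_iff] at hr
        exact hS p hp r hr.1 hr.2
      calc (p.1 + 1) * (p.2 + 1)
          = ((range (p.1 + 1)) ×ˢ (range (p.2 + 1))).card := by
            simp [Finset.card_product]
        _ ≤ S.card := Finset.card_le_card hsub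
    -- the erased set is still a lower set
    have hS' : ∀ p ∈ S.erase P, ∀ r : ℕ × ℕ, r.1 ≤ p.1 → r.2 ≤ p.2 → r ∈ S.erase P := by
      intro p hp r h1 h2
      have hpS : p ∈ S := Finset.mem_of_mem_erase hp
      have hrS : r ∈ S := hS p hpS r h1 h2
      refine Finset.mem_erase.2 ⟨?_, hrS⟩
      rintro rfl
      have hne' : r ≠ p := (Finset.ne_of_mem_erase hp).symm
      have hle : p.1 + p.2 ≤ r.1 + r.2 := hmax p hpS
      have : r = p := by
        have e1 : r.1 = p.1 := le_antisymm h1 (by omega)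
        have e2 : r.2 = p.2 := by omega
        exact Prod.ext e1 e2
      exact hne' this
    have hcard : S.card = (S.erase P).card + 1 := by
      have := Finset.card_pos.2 hne
      rw [Finset.card_erase_of_mem hP]
      omega
    have hkey : f (S.card) ≤ f ((P.1 + 1) * (P.2 + 1)) := hf (hprod P hP)
    calc ∑ k ∈ range S.card, f (k + 1)
        = ∑ k ∈ range (S.erase P).card, f (k + 1) + f ((S.erase P).card + 1) := by
          rw [hcard, Finset.sum_range_succ]
      _ ≤ ∑ p ∈ S.erase P, f ((p.1 + 1) * (p.2 + 1)) + f ((P.1 + 1) * (P.2 + 1)) := by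
          refine add_le_add (ih (S.erase P) (Finset.erase_ssubset hP) hS') ?_
          rw [← hcard]; exact hkey
      _ = ∑ p ∈ S, f ((p.1 + 1) * (p.2 + 1)) := by
          rw [Finset.sum_erase_add S _ hP]

/-- Finite Abel-summation comparison. -/
lemma lorentz_abel_fin (a b : ℕ → ℝ≥0∞) :
    ∀ (N : ℕ) (Z : ℕ → ℝ≥0∞), Antitone Z →
    (∀ n < N, Z (n + 1) < Z n →
      ∑ k ∈ range (n + 1), a k ≤ ∑ k ∈ range (n + 1), b k) →
    (Z N * ∑ k ∈ range (N + 1), a k ≤ Z N * ∑ k ∈ range (N + 1), b k) →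
    ∑ k ∈ range (N + 1), Z k * a k ≤ ∑ k ∈ range (N + 1), Z k * b k := by
  intro N
  induction N with
  | zero =>
    intro Z hZ H HN
    simpa using HN
  | succ N ih =>
    intro Z hZ H HN
    set Z' : ℕ → ℝ≥0∞ := fun k => Z k - Z (N + 1) with hZ'def
    have hZ' : Antitone Z' := fun i j hij => tsub_le_tsub_right (hZ hij) _
    have hZ'N : Z' (N + 1) = 0 := by simp [hZ'def]
    have H' : ∀ n < N, Z' (n + 1) < Z' n →
        ∑ k ∈ range (n + 1), a k ≤ ∑ k ∈ range (n + 1), b k := by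
      intro n hn hdrop
      refine H n (by omega) ?_
      by_contra hle
      exact absurd (tsub_le_tsub_right (le_of_not_gt hle) (Z (N + 1))) (not_le.2 hdrop)
    have HN' : Z' N * ∑ k ∈ range (N + 1), a k ≤ Z' N * ∑ k ∈ range (N + 1), b k := by
      by_cases h0 : Z' N = 0
      · simp [h0]
      · have hdrop : Z (N + 1) < Z N := by
          rcases lt_or_ge (Z (N + 1)) (Z N) with h | h
          · exact h
          · exact absurd (tsub_eq_zero_of_le h) h0
        exact mul_le_mul_right (H N (by omega) hdrop) _
    have hmain := ih Z' hZ' H' HN'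
    -- reconstruct
    have hsplit : ∀ c : ℕ → ℝ≥0∞, ∑ k ∈ range (N + 2), Z k * c k
        = ∑ k ∈ range (N + 1), Z' k * c k + Z (N + 1) * ∑ k ∈ range (N + 2), c k := by
      intro c
      have h1 : ∀ k ∈ range (N + 2), Z k * c k = Z' k * c k + Z (N + 1) * c k := by
        intro k hk
        rw [mem_range] at hk
        have h2 : Z' k + Z (N + 1) = Z k :=
          tsub_add_cancel_of_le (hZ (by omega : k ≤ N + 1))
        rw [← h2, add_mul]
      rw [Finset.sum_congr rfl h1, Finset.sum_add_distrib, Finset.mul_sum,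
        Finset.sum_range_succ (fun k => Z' k * c k), hZ'N, zero_mul, add_zero]
    calc ∑ k ∈ range (N + 2), Z k * a k
        = ∑ k ∈ range (N + 1), Z' k * a k + Z (N + 1) * ∑ k ∈ range (N + 2), a k :=
          hsplit a
      _ ≤ ∑ k ∈ range (N + 1), Z' k * b k + Z (N + 1) * ∑ k ∈ range (N + 2), b k :=
          add_le_add hmain HN
      _ = ∑ k ∈ range (N + 2), Z k * b k := (hsplit b).symm

lemma lorentz_abel_tsum (Z a b : ℕ → ℝ≥0∞) (hZ : Antitone Z)
    (H : ∀ n, Z (n + 1) < Z n →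
      ∑ k ∈ range (n + 1), a k ≤ ∑ k ∈ range (n + 1), b k)
    (Hb : ∑' k, b k = ⊤) :
    ∑' k, Z k * a k ≤ ∑' k, Z k * b k := by
  rw [ENNReal.tsum_eq_iSup_nat (f := fun k => Z k * a k)]
  refine iSup_le fun M => ?_
  have hpart : ∀ n, ∑ k ∈ range n, Z k * b k ≤ ∑' k, Z k * b k :=
    fun n => ENNReal.sum_le_tsum _
  by_cases hdrop : ∃ n, M ≤ n ∧ Z (n + 1) < Z n
  · obtain ⟨n, hn, hd⟩ := hdrop
    have hfin := lorentz_abel_fin a b n Z hZ (fun m _ hm => H m hm)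
      (mul_le_mul_right (H n hd) _)
    calc ∑ k ∈ range M, Z k * a k
        ≤ ∑ k ∈ range (n + 1), Z k * a k :=
          Finset.sum_le_sum_of_subset (Finset.range_subset_range.2 (by omega))
      _ ≤ ∑ k ∈ range (n + 1), Z k * b k := hfin
      _ ≤ _ := hpart _
  · push_neg at hdrop
    have hconst : ∀ j : ℕ, Z (M + j) = Z M := by
      intro j
      induction j with
      | zero => rfl
      | succ j ih =>
        have h1 : Z (M + j) ≤ Z (M + j + 1) := hdrop _ (by omega)
        have h2 : Z (M + j + 1) ≤ Z (M + j) := hZ (by omega)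
        have : Z (M + j + 1) = Z (M + j) := le_antisymm h2 h1
        rw [show M + (j + 1) = M + j + 1 from rfl, this, ih]
    have hgeM : ∀ k, Z M ≤ Z k := by
      intro k
      rcases Nat.lt_or_ge k M with h | h
      · exact hZ (le_of_lt h)
      · rw [show k = M + (k - M) by omega, hconst]
    by_cases h0 : Z M = 0
    · have hfin := lorentz_abel_fin a b M Z hZ (fun m _ hm => H m hm)
        (by rw [h0, zero_mul, zero_mul])
      calc ∑ k ∈ range M, Z k * a k
          ≤ ∑ k ∈ range (M + 1), Z k * a k :=
            Finset.sum_le_sum_of_subset (Finset.range_subset_range.2 (by omega))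
        _ ≤ ∑ k ∈ range (M + 1), Z k * b k := hfin
        _ ≤ _ := hpart _
    · have htop : ∑' k, Z k * b k = ⊤ := by
        have h1 : ∑' k, Z M * b k ≤ ∑' k, Z k * b k :=
          ENNReal.tsum_le_tsum fun k => mul_le_mul_left (hgeM k) _
        rw [ENNReal.tsum_mul_left, Hb, ENNReal.mul_top h0] at h1
        exact top_le_iff.1 h1
      rw [htop]
      exact le_top

/-- Submultiplicativity of the Lorentz S_{p,q} quantity over tensor products
of nonincreasing nonnegative sequences (0-indexed: x k stands for x_{k+1}). -/
theorem stmt_2 (p q : ℝ) (hq : 1 ≤ q) (hpq : q ≤ p)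
    (x y z : ℕ → ℝ)
    (hx : Antitone x) (hx0 : ∀ i, 0 ≤ x i)
    (hy : Antitone y) (hy0 : ∀ j, 0 ≤ y j)
    (hz : Antitone z) (hz0 : ∀ k, 0 ≤ z k)
    (e : ℕ ≃ ℕ × ℕ) (he : ∀ k, z k = x (e k).1 * y (e k).2) :
    (∑' k : ℕ, ENNReal.ofReal (z k) ^ q / (k + 1 : ENNReal) ^ (1 - q / p)) ^ (1 / q)
      ≤ (∑' i : ℕ, ENNReal.ofReal (x i) ^ q / (i + 1 : ENNReal) ^ (1 - q / p)) ^ (1 / q)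
        * (∑' j : ℕ, ENNReal.ofReal (y j) ^ q / (j + 1 : ENNReal) ^ (1 - q / p)) ^ (1 / q) := by
  have hq0 : (0 : ℝ) < q := lt_of_lt_of_le zero_lt_one hq
  have hp0 : (0 : ℝ) < p := lt_of_lt_of_le hq0 hpq
  set α : ℝ := 1 - q / p with hαdef
  have hα0 : 0 ≤ α := by
    have : q / p ≤ 1 := (div_le_one hp0).2 hpq
    simp [hαdef]; linarith
  have hα1 : α ≤ 1 := by
    have : 0 ≤ q / p := le_of_lt (div_pos hq0 hp0)
    simp [hαdef]; linarith
  set f : ℕ → ℝ≥0∞ := fun m => ((m : ℝ≥0∞) ^ α)⁻¹ with hfdef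
  have hfa : Antitone f := by
    intro m n h
    exact ENNReal.inv_le_inv.2 (ENNReal.rpow_le_rpow (by exact_mod_cast h) hα0)
  set Z : ℕ → ℝ≥0∞ := fun k => ENNReal.ofReal (z k) ^ q with hZdef
  set X : ℕ → ℝ≥0∞ := fun i => ENNReal.ofReal (x i) ^ q with hXdef
  set Y : ℕ → ℝ≥0∞ := fun j => ENNReal.ofReal (y j) ^ q with hYdef
  set a : ℕ → ℝ≥0∞ := fun k => f (k + 1) with hadef
  set b : ℕ → ℝ≥0∞ := fun k => f (((e k).1 + 1) * ((e k).2 + 1)) with hbdef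
  have hZanti : Antitone Z := by
    intro m n h
    exact ENNReal.rpow_le_rpow (ENNReal.ofReal_le_ofReal (hz h)) hq0.le
  have hcast : ∀ k : ℕ, ((k : ℝ≥0∞) + 1) = ((k + 1 : ℕ) : ℝ≥0∞) := by
    intro k; push_cast; ring
  -- rewrite each summand as Z k * a k
  have hLHS : ∀ k : ℕ, ENNReal.ofReal (z k) ^ q / ((k : ℝ≥0∞) + 1) ^ (1 - q / p)
      = Z k * a k := by
    intro k
    rw [div_eq_mul_inv, hcast k]
  -- the key inequality via Abel summation & lower sets
  have H : ∀ n, Z (n + 1) < Z n →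
      ∑ k ∈ range (n + 1), a k ≤ ∑ k ∈ range (n + 1), b k := by
    intro n hd
    have hzdrop : z (n + 1) < z n := by
      by_contra hc
      push_neg at hc
      exact absurd (ENNReal.rpow_le_rpow (ENNReal.ofReal_le_ofReal hc) hq0.le)
        (not_le.2 hd)
    set S : Finset (ℕ × ℕ) := (range (n + 1)).image (fun k => e k) with hSdef
    have hcard : S.card = n + 1 := by
      rw [hSdef, Finset.card_image_of_injective _ e.injective, card_range]
    have hlow : ∀ pr ∈ S, ∀ r : ℕ × ℕ, r.1 ≤ pr.1 → r.2 ≤ pr.2 → r ∈ S := by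
      intro pr hpr r h1 h2
      obtain ⟨k, hk, rfl⟩ := Finset.mem_image.1 hpr
      rw [mem_range] at hk
      have hr : e (e.symm r) = r := e.apply_symm_apply r
      have hzz : z k ≤ z (e.symm r) := by
        rw [he k, he (e.symm r), hr]
        exact mul_le_mul (hx h1) (hy h2) (hy0 _) (hx0 _)
      have hk' : (e.symm r : ℕ) < n + 1 := by
        by_contra hge
        push_neg at hge
        have h5 : z (e.symm r) ≤ z (n + 1) := hz hge
        have hzk : z n ≤ z k := hz (by omega)
        linarith
      exact Finset.mem_image.2 ⟨e.symm r, mem_range.2 hk', hr⟩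
    calc ∑ k ∈ range (n + 1), a k
        = ∑ k ∈ range S.card, f (k + 1) := by rw [hcard]
      _ ≤ ∑ pr ∈ S, f ((pr.1 + 1) * (pr.2 + 1)) := lorentz_lower_sum f hfa S hlow
      _ = ∑ k ∈ range (n + 1), b k := by
          rw [hSdef, Finset.sum_image (fun k _ l _ h => e.injective h)]
  -- divergence of the weight series
  have Hb : (∑' k, b k) = ⊤ := by
    have h1 : (∑' k, b k) = ∑' pr : ℕ × ℕ, f ((pr.1 + 1) * (pr.2 + 1)) :=
      Equiv.tsum_eq e (fun pr => f ((pr.1 + 1) * (pr.2 + 1)))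
    have h2 : (∑' j : ℕ, f ((j + 1) * (0 + 1)))
        ≤ ∑' pr : ℕ × ℕ, f ((pr.1 + 1) * (pr.2 + 1)) :=
      ENNReal.tsum_comp_le_tsum_of_injective
        (f := fun j : ℕ => ((j, 0) : ℕ × ℕ))
        (fun a b h => by simpa using congrArg Prod.fst h)
        (fun pr => f ((pr.1 + 1) * (pr.2 + 1)))
    have h3 : (∑' j : ℕ, ((j : ℝ≥0∞) + 1)⁻¹) ≤ ∑' j : ℕ, f ((j + 1) * (0 + 1)) := by
      refine ENNReal.tsum_le_tsum fun j => ?_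
      have hb1 : (1 : ℝ≥0∞) ≤ ((j + 1 : ℕ) : ℝ≥0∞) := by
        exact_mod_cast Nat.succ_le_succ (Nat.zero_le j)
      calc ((j : ℝ≥0∞) + 1)⁻¹
          = (((j + 1 : ℕ) : ℝ≥0∞) ^ (1 : ℝ))⁻¹ := by rw [ENNReal.rpow_one, hcast]
        _ ≤ (((j + 1 : ℕ) : ℝ≥0∞) ^ α)⁻¹ :=
            ENNReal.inv_le_inv.2 (ENNReal.rpow_le_rpow_of_exponent_le hb1 hα1)
        _ = f ((j + 1) * (0 + 1)) := by norm_num [hfdef]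
    have h4 : (∑' j : ℕ, ((j : ℝ≥0∞) + 1)⁻¹) = ⊤ := by
      by_contra hne
      have hco : ∀ j : ℕ, ((j : ℝ≥0∞) + 1)⁻¹ = ((((j : ℝ≥0) + 1)⁻¹ : ℝ≥0) : ℝ≥0∞) := by
        intro j
        rw [ENNReal.coe_inv (by positivity)]
        norm_cast
        rw [ENNReal.coe_inv (by positivity), ENNReal.coe_natCast]
      rw [tsum_congr hco] at hne
      have hs : Summable (fun j : ℕ => ((j : ℝ≥0) + 1)⁻¹) :=
        ENNReal.tsum_coe_ne_top_iff_summable.1 hne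
      have hs2 : Summable (fun j : ℕ => ((j : ℝ) + 1)⁻¹) := by
        have h6 := NNReal.summable_coe.2 hs
        simpa using h6
      have hs3 : Summable (fun j : ℕ => ((j : ℝ))⁻¹) := by
        rw [← summable_nat_add_iff 1]
        convert hs2 using 2 with j
        push_cast
        exacts [rfl, by push_cast; ring]
      exact Real.not_summable_natCast_inv hs3
    exact top_le_iff.1 (h4 ▸ (le_trans h3 (h2.trans_eq h1.symm)))
  have key : (∑' k, Z k * a k) ≤ ∑' k, Z k * b k :=
    lorentz_abel_tsum Z a b hZanti H Hb
  -- identify the right-hand side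
  have eq2 : (∑' k, Z k * b k)
      = (∑' i : ℕ, X i / ((i : ℝ≥0∞) + 1) ^ α) * (∑' j : ℕ, Y j / ((j : ℝ≥0∞) + 1) ^ α) := by
    have hpt : ∀ k : ℕ, Z k * b k
        = (X (e k).1 / (((e k).1 : ℝ≥0∞) + 1) ^ α)
          * (Y (e k).2 / (((e k).2 : ℝ≥0∞) + 1) ^ α) := by
      intro k
      have hZk : Z k = X (e k).1 * Y (e k).2 := by
        simp only [hZdef, hXdef, hYdef]
        rw [he k, ENNReal.ofReal_mul (hx0 _), ENNReal.mul_rpow_of_nonneg _ _ hq0.le]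
      have hbase1 : (((e k).1 : ℝ≥0∞) + 1) ≠ 0 :=
        ne_of_gt (lt_of_lt_of_le zero_lt_one le_add_self)
      have hbase1t : (((e k).1 : ℝ≥0∞) + 1) ≠ ⊤ := by
        exact ENNReal.add_ne_top.2 ⟨ENNReal.natCast_ne_top _, ENNReal.one_ne_top⟩
      have hbase2 : (((e k).2 : ℝ≥0∞) + 1) ≠ 0 :=
        ne_of_gt (lt_of_lt_of_le zero_lt_one le_add_self)
      have hbase2t : (((e k).2 : ℝ≥0∞) + 1) ≠ ⊤ :=
        ENNReal.add_ne_top.2 ⟨ENNReal.natCast_ne_top _, ENNReal.one_ne_top⟩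
      have hbk : b k = ((((e k).1 : ℝ≥0∞) + 1) ^ α)⁻¹ * ((((e k).2 : ℝ≥0∞) + 1) ^ α)⁻¹ := by
        simp only [hbdef, hfdef]
        rw [Nat.cast_mul, ← hcast, ← hcast,
          ENNReal.mul_rpow_of_nonneg _ _ hα0,
          ENNReal.mul_inv
            (Or.inl (by
              exact ne_of_gt (ENNReal.rpow_pos (by positivity) hbase1t)))
            (Or.inl (ENNReal.rpow_ne_top_of_nonneg hα0 hbase1t))]
      rw [hZk, hbk, div_eq_mul_inv, div_eq_mul_inv, mul_mul_mul_comm]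
    calc (∑' k, Z k * b k)
        = ∑' k : ℕ, (fun pr : ℕ × ℕ =>
            (X pr.1 / ((pr.1 : ℝ≥0∞) + 1) ^ α) * (Y pr.2 / ((pr.2 : ℝ≥0∞) + 1) ^ α)) (e k) :=
          tsum_congr hpt
      _ = ∑' pr : ℕ × ℕ,
            (X pr.1 / ((pr.1 : ℝ≥0∞) + 1) ^ α) * (Y pr.2 / ((pr.2 : ℝ≥0∞) + 1) ^ α) :=
          by exact Equiv.tsum_eq e (fun pr : ℕ × ℕ =>
            (X pr.1 / ((pr.1 : ℝ≥0∞) + 1) ^ α) * (Y pr.2 / ((pr.2 : ℝ≥0∞) + 1) ^ α))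
      _ = ∑' i : ℕ, ∑' j : ℕ,
            (X i / ((i : ℝ≥0∞) + 1) ^ α) * (Y j / ((j : ℝ≥0∞) + 1) ^ α) :=
          ENNReal.tsum_prod'
      _ = ∑' i : ℕ, (X i / ((i : ℝ≥0∞) + 1) ^ α) * (∑' j : ℕ, Y j / ((j : ℝ≥0∞) + 1) ^ α) := by
          exact tsum_congr fun i => ENNReal.tsum_mul_left
      _ = _ := ENNReal.tsum_mul_right
  -- conclude
  have main : (∑' k : ℕ, ENNReal.ofReal (z k) ^ q / ((k : ℝ≥0∞) + 1) ^ (1 - q / p))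
      ≤ (∑' i : ℕ, ENNReal.ofReal (x i) ^ q / ((i : ℝ≥0∞) + 1) ^ (1 - q / p))
        * (∑' j : ℕ, ENNReal.ofReal (y j) ^ q / ((j : ℝ≥0∞) + 1) ^ (1 - q / p)) := by
    calc (∑' k : ℕ, ENNReal.ofReal (z k) ^ q / ((k : ℝ≥0∞) + 1) ^ (1 - q / p))
        = ∑' k, Z k * a k := tsum_congr hLHS
      _ ≤ ∑' k, Z k * b k := key
      _ = _ := by rw [eq2]
  calc (∑' k : ℕ, ENNReal.ofReal (z k) ^ q / ((k : ℝ≥0∞) + 1) ^ (1 - q / p)) ^ (1 / q)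
      ≤ ((∑' i : ℕ, ENNReal.ofReal (x i) ^ q / ((i : ℝ≥0∞) + 1) ^ (1 - q / p))
          * (∑' j : ℕ, ENNReal.ofReal (y j) ^ q / ((j : ℝ≥0∞) + 1) ^ (1 - q / p))) ^ (1 / q) :=
        ENNReal.rpow_le_rpow main (by positivity)
    _ = _ := ENNReal.mul_rpow_of_nonneg _ _ (by positivity)
end

section
/- Let π_j = j^{1/p − 1} for some 1 ≤ p < ∞, and S_n = ∑_{j=1}^n j^{1/p−1}. Then S_{mn} ≤ S_m · S_n for all m, n ∈ ℕ. -/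
/-- For π_j = j^{1/p−1} (1 ≤ p < ∞) and S_n = ∑_{j=1}^n j^{1/p−1},
the partial sums are submultiplicative: S_{mn} ≤ S_m·S_n. -/
theorem stmt_4 (p : ℝ) (hp : 1 ≤ p)
    (S : ℕ → ℝ) (hS : ∀ n, S n = ∑ j ∈ Finset.Icc 1 n, (j : ℝ) ^ (1 / p - 1)) :
    ∀ m n : ℕ, S (m * n) ≤ S m * S n := by
  intro m n
  set α : ℝ := 1 / p - 1 with hαdef
  have hp0 : 0 < p := lt_of_lt_of_le one_pos hp
  have hα0 : α ≤ 0 := by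
    have h1 : 1 / p ≤ 1 := by rw [div_le_one hp0]; exact hp
    simp only [hαdef]; linarith
  rcases Nat.eq_zero_or_pos n with hn | hn
  · subst hn; simp [hS]
  rcases Nat.eq_zero_or_pos m with hm | hm
  · subst hm; simp [hS]
  -- the embedding
  set g : ℕ → ℕ × ℕ := fun j => ((j - 1) / n + 1, (j - 1) % n + 1) with hg
  have hmem : ∀ j ∈ Finset.Icc 1 (m * n), g j ∈ Finset.Icc 1 m ×ˢ Finset.Icc 1 n := by
    intro j hj
    simp only [Finset.mem_Icc] at hj
    simp only [hg, Finset.mem_product, Finset.mem_Icc]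
    refine ⟨⟨Nat.le_add_left _ _, ?_⟩, ⟨Nat.le_add_left _ _, ?_⟩⟩
    · have : (j - 1) / n < m := by
        rw [Nat.div_lt_iff_lt_mul hn]
        have : j - 1 < j := Nat.sub_lt (lt_of_lt_of_le one_pos hj.1) one_pos
        calc j - 1 < j := this
          _ ≤ m * n := hj.2
      omega
    · have := Nat.mod_lt (j - 1) hn
      omega
  have hle : ∀ j ∈ Finset.Icc 1 (m * n), ((g j).1 * (g j).2 : ℕ) ≤ j := by
    intro j hj
    simp only [Finset.mem_Icc] at hj
    have hdm := Nat.div_add_mod (j - 1) n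
    set q := (j - 1) / n
    set r := (j - 1) % n
    have hr : r < n := Nat.mod_lt _ hn
    have hj1 : 1 ≤ j := hj.1
    have : (q + 1) * (r + 1) = q * (r + 1) + r + 1 := by ring
    have hq : q * (r + 1) ≤ q * n := Nat.mul_le_mul_left q hr
    simp only [hg]
    calc (q + 1) * (r + 1) = q * (r + 1) + r + 1 := by ring
      _ ≤ q * n + r + 1 := by omega
      _ = n * q + r + 1 := by ring
      _ = (j - 1) + 1 := by omega
      _ = j := by omega
  have hinj : Set.InjOn g (Finset.Icc 1 (m * n)) := by
    intro a ha b hb hab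
    simp only [Finset.coe_Icc, Set.mem_Icc] at ha hb
    simp only [hg, Prod.mk.injEq] at hab
    have hda := Nat.div_add_mod (a - 1) n
    have hdb := Nat.div_add_mod (b - 1) n
    obtain ⟨h1, h2⟩ := hab
    have h1' : (a - 1) / n = (b - 1) / n := by omega
    have h2' : (a - 1) % n = (b - 1) % n := by omega
    rw [h1', h2'] at hda
    omega
  -- pointwise bound
  have hstep1 : S (m * n) ≤ ∑ j ∈ Finset.Icc 1 (m * n),
      ((g j).1 : ℝ) ^ α * ((g j).2 : ℝ) ^ α := by
    rw [hS]
    apply Finset.sum_le_sum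
    intro j hj
    have h1 : (0 : ℝ) < ((g j).1 * (g j).2 : ℕ) := by
      have : 0 < (g j).1 * (g j).2 := by simp [hg]
      exact_mod_cast this
    have h2 : (((g j).1 * (g j).2 : ℕ) : ℝ) ≤ (j : ℝ) := by
      exact_mod_cast hle j hj
    have := Real.rpow_le_rpow_of_nonpos h1 h2 hα0
    calc (j : ℝ) ^ α ≤ (((g j).1 * (g j).2 : ℕ) : ℝ) ^ α := this
      _ = ((g j).1 : ℝ) ^ α * ((g j).2 : ℝ) ^ α := by
          push_cast
          rw [Real.mul_rpow (by positivity) (by positivity)]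
  -- sum over image
  have hstep2 : ∑ j ∈ Finset.Icc 1 (m * n),
      ((g j).1 : ℝ) ^ α * ((g j).2 : ℝ) ^ α
      = ∑ x ∈ (Finset.Icc 1 (m * n)).image g, (x.1 : ℝ) ^ α * (x.2 : ℝ) ^ α := by
    rw [Finset.sum_image (fun a ha b hb h => hinj ha hb h)]
  have hstep3 : ∑ x ∈ (Finset.Icc 1 (m * n)).image g, (x.1 : ℝ) ^ α * (x.2 : ℝ) ^ α
      ≤ ∑ x ∈ Finset.Icc 1 m ×ˢ Finset.Icc 1 n, (x.1 : ℝ) ^ α * (x.2 : ℝ) ^ α := by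
    apply Finset.sum_le_sum_of_subset_of_nonneg
    · intro x hx
      obtain ⟨j, hj, rfl⟩ := Finset.mem_image.mp hx
      exact hmem j hj
    · intro x _ _
      positivity
  have hfinal : ∑ x ∈ Finset.Icc 1 m ×ˢ Finset.Icc 1 n, (x.1 : ℝ) ^ α * (x.2 : ℝ) ^ α
      = S m * S n := by
    rw [hS, hS, Finset.sum_mul_sum, Finset.sum_product]
  linarith [hstep1, hstep2.le, hstep3]
end

section
/- Let π be a binormalizing sequence with partial sums S_n, and suppose there exists c > 0 with S_{mn} ≤ c S_m S_n for all m, n. Then for all nonincreasing nonnegative sequences (a_i) and (b_j) with finite Φ_π-norm, Φ_π(nonincreasing rearrangement of (a_i b_j)_{i,j}) ≤ c · Φ_π(a) · Φ_π(b). -/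
open Filter Finset

lemma aux_le_apply {n : ℕ} (g : Fin n → ℕ) (hg : StrictMono g) :
    ∀ v (hv : v < n), v ≤ g ⟨v, hv⟩ := by
  intro v
  induction v with
  | zero => intro hv; exact Nat.zero_le _
  | succ v ih =>
    intro hv
    have hv' : v < n := Nat.lt_of_succ_lt hv
    have h1 : g ⟨v, hv'⟩ < g ⟨v+1, hv⟩ := hg (by simp [Fin.lt_def])
    have h2 := ih hv'
    omega

lemma aux_sum_card (f : ℕ → ENNReal) (hf : Antitone f) (s : Finset ℕ) :
    ∑ x ∈ s, f x ≤ ∑ i ∈ Finset.range s.card, f i := by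
  classical
  have h1 : ∑ x ∈ s, f x = ∑ i : Fin s.card, f ((s.orderIsoOfFin rfl) i : ℕ) := by
    rw [← Finset.sum_coe_sort s f,
      ← Equiv.sum_comp (s.orderIsoOfFin rfl).toEquiv (fun x : {x // x ∈ s} => f ↑x)]
    rfl
  rw [h1, ← Fin.sum_univ_eq_sum_range]
  apply Finset.sum_le_sum
  intro i _
  apply hf
  rw [Finset.coe_orderIsoOfFin_apply]
  exact aux_le_apply _ (s.orderEmbOfFin rfl).strictMono i.1 i.2

lemma aux_tel (f : ℕ → ℝ) (hf : Antitone f) (hft : Tendsto f atTop (nhds 0)) (i : ℕ) :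
    (∑' m : ℕ, if i ≤ m then ENNReal.ofReal (f m - f (m+1)) else 0) = ENNReal.ofReal (f i) := by
  have key : ∀ N, ∑ m ∈ Finset.range N, (if i ≤ m then ENNReal.ofReal (f m - f (m+1)) else 0)
      = ENNReal.ofReal (f i - f (max i N)) := by
    intro N
    induction N with
    | zero => simp
    | succ N ih =>
      rw [Finset.sum_range_succ, ih]
      by_cases h : i ≤ N
      · rw [if_pos h, max_eq_right h, max_eq_right (h.trans (Nat.le_succ N)),
          ← ENNReal.ofReal_add (by linarith [hf h]) (by linarith [hf (Nat.le_succ N)])]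
        congr 1
        ring
      · have h1 : max i N = i := max_eq_left (by omega)
        have h2 : max i (N+1) = i := max_eq_left (by omega)
        rw [if_neg h, add_zero, h1, h2]
  have hlimit := ENNReal.tendsto_nat_tsum
    (fun m => if i ≤ m then ENNReal.ofReal (f m - f (m+1)) else 0)
  simp only [key] at hlimit
  have h2 : Tendsto (fun N => ENNReal.ofReal (f i - f (max i N))) atTop
      (nhds (ENNReal.ofReal (f i))) := by
    have hmax : Tendsto (fun N => f (max i N)) atTop (nhds 0) :=
      hft.comp (tendsto_atTop_mono (fun N => le_max_right i N) tendsto_id)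
    have hsub : Tendsto (fun N => f i - f (max i N)) atTop (nhds (f i - 0)) :=
      tendsto_const_nhds.sub hmax
    rw [sub_zero] at hsub
    exact (ENNReal.continuous_ofReal.tendsto _).comp hsub
  exact tendsto_nhds_unique hlimit h2


/-- If the partial sums S of a binormalizing sequence π satisfy
S_{mn} ≤ c·S_m·S_n, then Φ_π is submultiplicative on tensor products: for nonincreasing
nonnegative sequences a, b (0-indexed) with finite Φ_π-norm and z the nonincreasing
rearrangement of the products (a_i·b_j), we have Φ_π(z) ≤ c·Φ_π(a)·Φ_π(b). -/
theorem stmt_8 (π : ℕ → ℝ) (hπpos : ∀ j, 1 ≤ j → 0 < π j)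
    (hπanti : ∀ i j : ℕ, 1 ≤ i → i ≤ j → π j ≤ π i) (hπ1 : π 1 = 1)
    (hπlim : Filter.Tendsto π Filter.atTop (nhds 0)) (hπdiv : ¬ Summable π)
    (S : ℕ → ℝ) (hS : ∀ m, S m = ∑ j ∈ Finset.Icc 1 m, π j)
    (c : ℝ) (hc : 0 < c) (hsub : ∀ m n : ℕ, S (m * n) ≤ c * S m * S n)
    (a b z : ℕ → ℝ)
    (ha : Antitone a) (ha0 : ∀ i, 0 ≤ a i) (haΦ : Summable (fun i => π (i + 1) * a i))
    (hb : Antitone b) (hb0 : ∀ j, 0 ≤ b j) (hbΦ : Summable (fun j => π (j + 1) * b j))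
    (hz : Antitone z) (hz0 : ∀ k, 0 ≤ z k)
    (e : ℕ ≃ ℕ × ℕ) (he : ∀ k, z k = a (e k).1 * b (e k).2) :
    (∑' k : ℕ, π (k + 1) * z k)
      ≤ c * (∑' i : ℕ, π (i + 1) * a i) * (∑' j : ℕ, π (j + 1) * b j) := by
  classical
  have hπ0 : ∀ k : ℕ, 0 ≤ π (k+1) := fun k => (hπpos _ (Nat.le_add_left 1 k)).le
  -- a and b tend to 0
  have hlim : ∀ (f : ℕ → ℝ), Antitone f → (∀ i, 0 ≤ f i) →
      Summable (fun i => π (i+1) * f i) → Tendsto f atTop (nhds 0) := by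
    intro f hf hf0 hfs
    have hbdd : BddBelow (Set.range f) := ⟨0, by rintro x ⟨i, rfl⟩; exact hf0 i⟩
    have htend := tendsto_atTop_ciInf hf hbdd
    have hL0 : 0 ≤ ⨅ i, f i := le_ciInf hf0
    rcases hL0.lt_or_eq with hL | hL
    · exfalso
      have hle : ∀ i, (⨅ i, f i) ≤ f i := fun i => ciInf_le hbdd i
      have h1 : Summable (fun i : ℕ => π (i+1) * (⨅ i, f i)) :=
        Summable.of_nonneg_of_le (fun i => mul_nonneg (hπ0 i) hL.le)
          (fun i => mul_le_mul_of_nonneg_left (hle i) (hπ0 i)) hfs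
      have h2 : Summable (fun i : ℕ => π (i+1)) := by
        have h3 := h1.mul_right (⨅ i, f i)⁻¹
        simpa [mul_assoc, mul_inv_cancel₀ hL.ne'] using h3
      exact hπdiv ((summable_nat_add_iff 1).mp h2)
    · rwa [← hL] at htend
  have halim := hlim a ha ha0 haΦ
  have hblim := hlim b hb hb0 hbΦ
  set P : ℕ → ENNReal := fun k => ENNReal.ofReal (π (k+1)) with hPdef
  have hPanti : Antitone P := fun k l hkl =>
    ENNReal.ofReal_le_ofReal (hπanti (k+1) (l+1) (Nat.le_add_left 1 k) (by omega))
  have hS0 : ∀ M, 0 ≤ S M := by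
    intro M
    rw [hS]
    exact Finset.sum_nonneg fun j hj => (hπpos j (Finset.mem_Icc.mp hj).1).le
  have hSof : ∀ M, ENNReal.ofReal (S M) = ∑ k ∈ Finset.range M, P k := by
    intro M
    have h1 : S M = ∑ k ∈ Finset.range M, π (k+1) := by
      rw [hS, ← Finset.Ico_add_one_right_eq_Icc, Finset.sum_Ico_eq_sum_range]
      simp [add_comm]
    rw [h1, ENNReal.ofReal_sum_of_nonneg (fun k _ => hπ0 k)]
  -- tensor-set bound
  have hT : ∀ m n : ℕ, (∑' k : ℕ, if (e k).1 ≤ m ∧ (e k).2 ≤ n then P k else 0)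
      ≤ ENNReal.ofReal (S ((m+1)*(n+1))) := by
    intro m n
    set F : Finset ℕ := (Finset.range (m+1) ×ˢ Finset.range (n+1)).image e.symm with hF
    have hmemF : ∀ k, k ∈ F ↔ ((e k).1 ≤ m ∧ (e k).2 ≤ n) := by
      intro k
      simp only [hF, Finset.mem_image, Finset.mem_product, Finset.mem_range]
      constructor
      · rintro ⟨p, hp, rfl⟩
        rw [e.apply_symm_apply]
        exact ⟨Nat.lt_succ_iff.mp hp.1, Nat.lt_succ_iff.mp hp.2⟩
      · intro h
        exact ⟨e k, ⟨Nat.lt_succ_of_le h.1, Nat.lt_succ_of_le h.2⟩, e.symm_apply_apply k⟩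
    have hcard : F.card = (m+1) * (n+1) := by
      rw [hF, Finset.card_image_of_injective _ e.symm.injective, Finset.card_product,
        Finset.card_range, Finset.card_range]
    have h1 : (∑' k : ℕ, if (e k).1 ≤ m ∧ (e k).2 ≤ n then P k else 0) = ∑ k ∈ F, P k := by
      rw [tsum_eq_sum (s := F) (fun k hk => if_neg (fun hc' => hk ((hmemF k).mpr hc')))]
      exact Finset.sum_congr rfl fun k hk => if_pos ((hmemF k).mp hk)
    rw [h1, hSof, ← hcard]
    exact aux_sum_card P hPanti F
  -- rewriting a, b via telescoping
  have ha_of : ∀ i, ENNReal.ofReal (a i)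
      = ∑' m : ℕ, (if i ≤ m then ENNReal.ofReal (a m - a (m+1)) else 0) :=
    fun i => (aux_tel a ha halim i).symm
  have hb_of : ∀ j, ENNReal.ofReal (b j)
      = ∑' n : ℕ, (if j ≤ n then ENNReal.ofReal (b n - b (n+1)) else 0) :=
    fun j => (aux_tel b hb hblim j).symm
  -- Abel summation
  have abel : ∀ (f : ℕ → ℝ), Antitone f → Tendsto f atTop (nhds 0) →
      (∑' m : ℕ, ENNReal.ofReal (f m - f (m+1)) * ENNReal.ofReal (S (m+1)))
        = ∑' i : ℕ, P i * ENNReal.ofReal (f i) := by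
    intro f hf hft
    have h1 : ∀ m : ℕ, ENNReal.ofReal (f m - f (m+1)) * ENNReal.ofReal (S (m+1))
        = ∑' k : ℕ, (if k ≤ m then ENNReal.ofReal (f m - f (m+1)) * P k else 0) := by
      intro m
      rw [hSof, Finset.mul_sum, eq_comm,
        tsum_eq_sum (s := Finset.range (m+1))
          (fun k hk => if_neg (fun hc' => hk (Finset.mem_range.mpr (Nat.lt_succ_of_le hc'))))]
      exact Finset.sum_congr rfl fun k hk => if_pos (Nat.lt_succ_iff.mp (Finset.mem_range.mp hk))
    calc (∑' m : ℕ, ENNReal.ofReal (f m - f (m+1)) * ENNReal.ofReal (S (m+1)))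
        = ∑' (m : ℕ) (k : ℕ), (if k ≤ m then ENNReal.ofReal (f m - f (m+1)) * P k else 0) :=
          tsum_congr h1
      _ = ∑' (k : ℕ) (m : ℕ), (if k ≤ m then ENNReal.ofReal (f m - f (m+1)) * P k else 0) :=
          ENNReal.tsum_comm
      _ = ∑' k : ℕ, P k * ∑' m : ℕ, (if k ≤ m then ENNReal.ofReal (f m - f (m+1)) else 0) := by
          refine tsum_congr fun k => ?_
          rw [← ENNReal.tsum_mul_left]
          refine tsum_congr fun m => ?_
          rw [mul_ite, mul_zero, mul_comm]
      _ = ∑' i : ℕ, P i * ENNReal.ofReal (f i) :=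
          tsum_congr fun k => by rw [aux_tel f hf hft k]
  -- the pointwise expansion
  have step1 : ∀ k : ℕ, P k * ENNReal.ofReal (z k)
      = ∑' (m : ℕ) (n : ℕ), (if (e k).1 ≤ m ∧ (e k).2 ≤ n
          then ENNReal.ofReal (a m - a (m+1)) * ENNReal.ofReal (b n - b (n+1)) * P k else 0) := by
    intro k
    rw [he k, ENNReal.ofReal_mul (ha0 _), ha_of ((e k).1), hb_of ((e k).2),
      ← ENNReal.tsum_mul_right, ← ENNReal.tsum_mul_left]
    refine tsum_congr fun m => ?_
    rw [← ENNReal.tsum_mul_left, ← ENNReal.tsum_mul_left]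
    refine tsum_congr fun n => ?_
    by_cases h1 : (e k).1 ≤ m
    · by_cases h2 : (e k).2 ≤ n
      · rw [if_pos h1, if_pos h2, if_pos (⟨h1, h2⟩ : _ ∧ _)]
        ring
      · simp [h1, h2]
    · simp [h1]
  -- main ENNReal inequality
  have main : (∑' k : ℕ, P k * ENNReal.ofReal (z k))
      ≤ ENNReal.ofReal c * ((∑' i : ℕ, P i * ENNReal.ofReal (a i)) *
        (∑' j : ℕ, P j * ENNReal.ofReal (b j))) := by
    calc (∑' k : ℕ, P k * ENNReal.ofReal (z k))
        = ∑' (k : ℕ) (m : ℕ) (n : ℕ), (if (e k).1 ≤ m ∧ (e k).2 ≤ n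
            then ENNReal.ofReal (a m - a (m+1)) * ENNReal.ofReal (b n - b (n+1)) * P k else 0) :=
          tsum_congr step1
      _ = ∑' (m : ℕ) (k : ℕ) (n : ℕ), (if (e k).1 ≤ m ∧ (e k).2 ≤ n
            then ENNReal.ofReal (a m - a (m+1)) * ENNReal.ofReal (b n - b (n+1)) * P k else 0) :=
          ENNReal.tsum_comm
      _ = ∑' (m : ℕ) (n : ℕ) (k : ℕ), (if (e k).1 ≤ m ∧ (e k).2 ≤ n
            then ENNReal.ofReal (a m - a (m+1)) * ENNReal.ofReal (b n - b (n+1)) * P k else 0) :=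
          tsum_congr fun m => ENNReal.tsum_comm
      _ = ∑' (m : ℕ) (n : ℕ), ENNReal.ofReal (a m - a (m+1)) * ENNReal.ofReal (b n - b (n+1)) *
            (∑' k : ℕ, if (e k).1 ≤ m ∧ (e k).2 ≤ n then P k else 0) := by
          refine tsum_congr fun m => tsum_congr fun n => ?_
          rw [← ENNReal.tsum_mul_left]
          exact tsum_congr fun k => by rw [mul_ite, mul_zero]
      _ ≤ ∑' (m : ℕ) (n : ℕ), ENNReal.ofReal (a m - a (m+1)) * ENNReal.ofReal (b n - b (n+1)) *
            (ENNReal.ofReal c * ENNReal.ofReal (S (m+1)) * ENNReal.ofReal (S (n+1))) := by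
          refine ENNReal.tsum_le_tsum fun m => ENNReal.tsum_le_tsum fun n => ?_
          refine mul_le_mul_right ?_ _
          calc (∑' k : ℕ, if (e k).1 ≤ m ∧ (e k).2 ≤ n then P k else 0)
              ≤ ENNReal.ofReal (S ((m+1)*(n+1))) := hT m n
            _ ≤ ENNReal.ofReal (c * S (m+1) * S (n+1)) :=
                ENNReal.ofReal_le_ofReal (hsub (m+1) (n+1))
            _ = ENNReal.ofReal c * ENNReal.ofReal (S (m+1)) * ENNReal.ofReal (S (n+1)) := by
                rw [ENNReal.ofReal_mul (mul_nonneg hc.le (hS0 (m+1))), ENNReal.ofReal_mul hc.le]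
      _ = ENNReal.ofReal c * ((∑' m : ℕ, ENNReal.ofReal (a m - a (m+1)) * ENNReal.ofReal (S (m+1)))
            * (∑' n : ℕ, ENNReal.ofReal (b n - b (n+1)) * ENNReal.ofReal (S (n+1)))) := by
          calc ∑' (m : ℕ) (n : ℕ), ENNReal.ofReal (a m - a (m+1)) * ENNReal.ofReal (b n - b (n+1)) *
                (ENNReal.ofReal c * ENNReal.ofReal (S (m+1)) * ENNReal.ofReal (S (n+1)))
              = ∑' (m : ℕ) (n : ℕ), (ENNReal.ofReal c *
                  (ENNReal.ofReal (a m - a (m+1)) * ENNReal.ofReal (S (m+1)))) *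
                  (ENNReal.ofReal (b n - b (n+1)) * ENNReal.ofReal (S (n+1))) :=
                tsum_congr fun m => tsum_congr fun n => by ring
            _ = ∑' (m : ℕ), (ENNReal.ofReal c *
                  (ENNReal.ofReal (a m - a (m+1)) * ENNReal.ofReal (S (m+1)))) *
                  (∑' n : ℕ, ENNReal.ofReal (b n - b (n+1)) * ENNReal.ofReal (S (n+1))) :=
                tsum_congr fun m => ENNReal.tsum_mul_left
            _ = (∑' (m : ℕ), ENNReal.ofReal c *
                  (ENNReal.ofReal (a m - a (m+1)) * ENNReal.ofReal (S (m+1)))) *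
                  (∑' n : ℕ, ENNReal.ofReal (b n - b (n+1)) * ENNReal.ofReal (S (n+1))) :=
                ENNReal.tsum_mul_right
            _ = _ := by rw [ENNReal.tsum_mul_left, mul_assoc]
      _ = ENNReal.ofReal c * ((∑' i : ℕ, P i * ENNReal.ofReal (a i)) *
            (∑' j : ℕ, P j * ENNReal.ofReal (b j))) := by
          rw [abel a ha halim, abel b hb hblim]
  -- back to the reals
  have hA : (∑' i : ℕ, P i * ENNReal.ofReal (a i))
      = ENNReal.ofReal (∑' i : ℕ, π (i+1) * a i) := by
    rw [ENNReal.ofReal_tsum_of_nonneg (fun i => mul_nonneg (hπ0 i) (ha0 i)) haΦ]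
    exact tsum_congr fun i => (ENNReal.ofReal_mul (hπ0 i)).symm
  have hB : (∑' j : ℕ, P j * ENNReal.ofReal (b j))
      = ENNReal.ofReal (∑' j : ℕ, π (j+1) * b j) := by
    rw [ENNReal.ofReal_tsum_of_nonneg (fun j => mul_nonneg (hπ0 j) (hb0 j)) hbΦ]
    exact tsum_congr fun j => (ENNReal.ofReal_mul (hπ0 j)).symm
  have hA0 : 0 ≤ ∑' i : ℕ, π (i+1) * a i := tsum_nonneg fun i => mul_nonneg (hπ0 i) (ha0 i)
  have hB0 : 0 ≤ ∑' j : ℕ, π (j+1) * b j := tsum_nonneg fun j => mul_nonneg (hπ0 j) (hb0 j)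
  by_cases hzs : Summable (fun k => π (k+1) * z k)
  · have h1 : ENNReal.ofReal (∑' k : ℕ, π (k+1) * z k)
        ≤ ENNReal.ofReal (c * ((∑' i : ℕ, π (i+1) * a i) * (∑' j : ℕ, π (j+1) * b j))) := by
      rw [ENNReal.ofReal_tsum_of_nonneg (fun k => mul_nonneg (hπ0 k) (hz0 k)) hzs,
        ENNReal.ofReal_mul hc.le, ENNReal.ofReal_mul hA0, ← hA, ← hB]
      calc (∑' k : ℕ, ENNReal.ofReal (π (k+1) * z k))
          = ∑' k : ℕ, P k * ENNReal.ofReal (z k) :=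
            tsum_congr fun k => ENNReal.ofReal_mul (hπ0 k)
        _ ≤ _ := main
    have h2 := (ENNReal.ofReal_le_ofReal_iff
      (mul_nonneg hc.le (mul_nonneg hA0 hB0))).mp h1
    linarith [h2]
  · rw [tsum_eq_zero_of_not_summable hzs]
    exact mul_nonneg (mul_nonneg hc.le hA0) hB0
end

section
/- Let (a_n) be positive reals with a_1 = 1 and suppose both: (i) there is c₁ > 0 with a_{mn} ≤ c₁ a_m a_n for all m,n, and (ii) there is c₂ > 0 with a_{mn} ≥ c₂ a_m a_n for all m,n. If additionally a is exactly multiplicative (c₁ = c₂ = 1, i.e., a_{mn} = a_m a_n) and nondecreasing with a_n → ∞, then there exists p ∈ (0,∞] such that a_n = n^{1/p} for all n, or a_n = 1 for all n. -/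
/-- A positive, exactly multiplicative (a_{mn} = a_m·a_n for all m,n),
nondecreasing sequence with a_1 = 1 tending to ∞ is a power function: a_n = n^{1/p}
for some p ∈ (0,∞), or a_n = 1 for all n. -/
theorem stmt_11 (a : ℕ → ℝ) (hpos : ∀ n, 1 ≤ n → 0 < a n) (h1 : a 1 = 1)
    (c₁ : ℝ) (hc₁ : 0 < c₁)
    (hsub : ∀ m n : ℕ, 1 ≤ m → 1 ≤ n → a (m * n) ≤ c₁ * a m * a n)
    (c₂ : ℝ) (hc₂ : 0 < c₂)
    (hsuper : ∀ m n : ℕ, 1 ≤ m → 1 ≤ n → c₂ * a m * a n ≤ a (m * n))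
    (hmul : ∀ m n : ℕ, 1 ≤ m → 1 ≤ n → a (m * n) = a m * a n)
    (hmono : ∀ m n : ℕ, 1 ≤ m → m ≤ n → a m ≤ a n)
    (hinf : Filter.Tendsto a Filter.atTop Filter.atTop) :
    (∃ p : ℝ, 0 < p ∧ ∀ n : ℕ, 1 ≤ n → a n = (n : ℝ) ^ (1 / p))
      ∨ (∀ n : ℕ, 1 ≤ n → a n = 1) := by
  have apow : ∀ m : ℕ, 1 ≤ m → ∀ k : ℕ, a (m ^ k) = (a m) ^ k := by
    intro m hm k
    induction k with
    | zero => simpa using h1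
    | succ k ih =>
      have h := hmul (m ^ k) m (Nat.one_le_pow _ _ hm) hm
      rw [← pow_succ] at h
      rw [h, ih, pow_succ]
  left
  have h2pos : 0 < a 2 := hpos 2 (by norm_num)
  have h2 : 1 < a 2 := by
    rcases lt_or_ge 1 (a 2) with h | h
    · exact h
    have h2' : a 2 = 1 := le_antisymm h (by rw [← h1]; exact hmono 1 2 le_rfl one_le_two)
    exfalso
    have hb : ∀ n : ℕ, 1 ≤ n → a n ≤ 1 := by
      intro n hn
      have hle : n ≤ 2 ^ n := Nat.le_of_lt (Nat.lt_two_pow_self (n := n))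
      have h := hmono n (2 ^ n) hn hle
      rwa [apow 2 (by norm_num) n, h2', one_pow] at h
    rcases ((hinf.eventually_ge_atTop 2).and (Filter.eventually_ge_atTop 1)).exists
      with ⟨n, hn2, hn1⟩
    linarith [hb n hn1]
  set C := Real.log (a 2) with hCdef
  set D := Real.log 2 with hDdef
  have hCpos : 0 < C := Real.log_pos h2
  have hDpos : 0 < D := Real.log_pos (by norm_num)
  have key : ∀ n : ℕ, 1 ≤ n → Real.log (a n) * D = Real.log n * C := by
    intro n hn
    set A := Real.log (a n) with hAdef
    set B := Real.log (n : ℝ) with hBdef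
    have hanpos : 0 < a n := hpos n hn
    have hnR : (1 : ℝ) ≤ (n : ℝ) := by exact_mod_cast hn
    have hbound : ∀ k : ℕ, 1 ≤ k → |A * D - B * C| ≤ C * D / k := by
      intro k hk
      have hkR : (0 : ℝ) < (k : ℝ) := by exact_mod_cast hk
      set j := Nat.log 2 (n ^ k) with hjdef
      have hnk : 1 ≤ n ^ k := Nat.one_le_pow _ _ hn
      have hl : 2 ^ j ≤ n ^ k := Nat.pow_log_le_self 2 (by omega)
      have hr : n ^ k < 2 ^ (j + 1) := Nat.lt_pow_succ_log_self (by norm_num) _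
      have ha1 : (a 2) ^ j ≤ (a n) ^ k := by
        have h := hmono (2 ^ j) (n ^ k) (Nat.one_le_two_pow) hl
        rwa [apow 2 (by norm_num), apow n hn] at h
      have ha2 : (a n) ^ k ≤ (a 2) ^ (j + 1) := by
        have h := hmono (n ^ k) (2 ^ (j + 1)) hnk hr.le
        rwa [apow 2 (by norm_num), apow n hn] at h
      have hA1 : (j : ℝ) * C ≤ (k : ℝ) * A := by
        have h := Real.log_le_log (by positivity) ha1
        rwa [Real.log_pow, Real.log_pow] at h
      have hA2 : (k : ℝ) * A ≤ ((j : ℝ) + 1) * C := by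
        have h := Real.log_le_log (by positivity) ha2
        rw [Real.log_pow, Real.log_pow] at h
        push_cast at h ⊢
        linarith
      have hlR : (2 : ℝ) ^ j ≤ (n : ℝ) ^ k := by exact_mod_cast hl
      have hrR : (n : ℝ) ^ k ≤ (2 : ℝ) ^ (j + 1) := by exact_mod_cast hr.le
      have hB1 : (j : ℝ) * D ≤ (k : ℝ) * B := by
        have h := Real.log_le_log (by positivity) hlR
        rwa [Real.log_pow, Real.log_pow] at h
      have hB2 : (k : ℝ) * B ≤ ((j : ℝ) + 1) * D := by
        have h := Real.log_le_log (by positivity) hrR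
        rw [Real.log_pow, Real.log_pow] at h
        push_cast at h ⊢
        linarith
      have hup : (A * D - B * C) * k ≤ C * D := by nlinarith
      have hlo : (B * C - A * D) * k ≤ C * D := by nlinarith
      rw [abs_le]
      constructor
      · have : B * C - A * D ≤ C * D / k := (le_div_iff₀ hkR).mpr hlo
        linarith
      · exact (le_div_iff₀ hkR).mpr hup
    by_contra hne
    have habs : 0 < |A * D - B * C| := abs_pos.mpr (sub_ne_zero.mpr hne)
    obtain ⟨k, hk⟩ := exists_nat_gt (C * D / |A * D - B * C|)
    have hkpos : (0 : ℝ) < (k : ℝ) := lt_trans (by positivity) hk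
    have hk1 : 1 ≤ k := by exact_mod_cast Nat.one_le_iff_ne_zero.mpr (by
      intro h; rw [h] at hkpos; norm_num at hkpos)
    have h1' := hbound k hk1
    have h2' : C * D / k < |A * D - B * C| := by
      rw [div_lt_iff₀ hkpos]
      have := (div_lt_iff₀ habs).mp hk
      nlinarith
    linarith
  refine ⟨D / C, by positivity, ?_⟩
  intro n hn
  have hnpos : (0 : ℝ) < (n : ℝ) := by exact_mod_cast hn
  rw [one_div_div]
  have hlog : Real.log (a n) = Real.log (n : ℝ) * (C / D) := by
    have h := key n hn
    field_simp
    linarith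
  rw [← Real.exp_log (hpos n hn), hlog, Real.rpow_def_of_pos hnpos]
end

section
/- Let B be an m×k complex matrix with operator norm ‖B‖, let T₁,…,T_m be n×n matrices, define S_j = ∑_i B_{ij} T_i for j = 1,…,k, and let x be an n×n positive semidefinite matrix. Then for any unitarily invariant norm ‖·‖_Ψ on matrices, ‖∑_{j=1}^k S_j x S_j^*‖_Ψ ≤ ‖B‖² · ‖∑_{i=1}^m T_i x T_i^*‖_Ψ. -/
open Matrix
open scoped ComplexOrder Matrix.Norms.L2Operator Kronecker

section Aux

variable {m k n : Type} [Fintype m] [Fintype k] [Fintype n] [DecidableEq k] [DecidableEq n]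

private lemma euclid_sq {ι : Type} [Fintype ι] (w : ι → ℂ) :
    ‖(WithLp.equiv 2 (ι → ℂ)).symm w‖ ^ 2 = ∑ i, ‖w i‖ ^ 2 := by
  rw [EuclideanSpace.norm_eq, Real.sq_sqrt (by positivity)]
  simp

private lemma mulVec_sq_bound (A : Matrix m k ℂ) (v : k → ℂ) :
    ∑ i, ‖A.mulVec v i‖ ^ 2 ≤ ‖A‖ ^ 2 * ∑ j, ‖v j‖ ^ 2 := by
  have h : ‖(WithLp.equiv 2 (m → ℂ)).symm (A *ᵥ v)‖ ≤
      ‖A‖ * ‖(WithLp.equiv 2 (k → ℂ)).symm v‖ :=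
    Matrix.l2_opNorm_mulVec A ((WithLp.equiv 2 (k → ℂ)).symm v)
  calc ∑ i, ‖A.mulVec v i‖ ^ 2
      = ‖(WithLp.equiv 2 (m → ℂ)).symm (A *ᵥ v)‖ ^ 2 := (euclid_sq _).symm
    _ ≤ (‖A‖ * ‖(WithLp.equiv 2 (k → ℂ)).symm v‖) ^ 2 :=
        pow_le_pow_left₀ (norm_nonneg _) h 2
    _ = ‖A‖ ^ 2 * ∑ j, ‖v j‖ ^ 2 := by rw [mul_pow, euclid_sq]

private lemma norm_le_of_mulVec {c : ℝ} (hc : 0 ≤ c) (A : Matrix m k ℂ)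
    (h : ∀ v : k → ℂ, ∑ i, ‖A.mulVec v i‖ ^ 2 ≤ c ^ 2 * ∑ j, ‖v j‖ ^ 2) : ‖A‖ ≤ c := by
  rw [Matrix.l2_opNorm_def]
  refine ContinuousLinearMap.opNorm_le_bound _ hc fun x => ?_
  have e : ((Matrix.toEuclideanLin (𝕜 := ℂ) (m := m) (n := k)).trans
      LinearMap.toContinuousLinearMap A) x
      = (WithLp.equiv 2 (m → ℂ)).symm (A *ᵥ (WithLp.equiv 2 (k → ℂ)) x) := rfl
  rw [e]
  have hx := h ((WithLp.equiv 2 (k → ℂ)) x)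
  have hxe : ‖x‖ ^ 2 = ∑ j, ‖(WithLp.equiv 2 (k → ℂ)) x j‖ ^ 2 := by
    rw [← euclid_sq ((WithLp.equiv 2 (k → ℂ)) x), Equiv.symm_apply_apply]
  have h1 : ‖(WithLp.equiv 2 (m → ℂ)).symm (A *ᵥ (WithLp.equiv 2 (k → ℂ)) x)‖ ^ 2
      ≤ (c * ‖x‖) ^ 2 := by
    rw [euclid_sq, mul_pow, hxe]
    exact hx
  nlinarith [norm_nonneg ((WithLp.equiv 2 (m → ℂ)).symm (A *ᵥ (WithLp.equiv 2 (k → ℂ)) x)),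
    mul_nonneg hc (norm_nonneg x)]

private lemma kron_one_norm [Nonempty n] (B : Matrix m k ℂ) :
    ‖B ⊗ₖ (1 : Matrix n n ℂ)‖ = ‖B‖ := by
  have hmul : ∀ (v : k × n → ℂ) (i : m) (q : n),
      ((B ⊗ₖ (1 : Matrix n n ℂ)) *ᵥ v) (i, q) = (B *ᵥ fun j => v (j, q)) i := by
    intro v i q
    simp [Matrix.mulVec, dotProduct, Fintype.sum_prod_type, Matrix.one_apply,
      mul_ite, mul_one, mul_zero, ite_mul, zero_mul, Finset.sum_ite_eq, Finset.mem_univ]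
  refine le_antisymm ?_ ?_
  · refine norm_le_of_mulVec (norm_nonneg B) _ fun v => ?_
    calc ∑ p : m × n, ‖((B ⊗ₖ (1 : Matrix n n ℂ)) *ᵥ v) p‖ ^ 2
        = ∑ q : n, ∑ i : m, ‖(B *ᵥ fun j => v (j, q)) i‖ ^ 2 := by
          rw [Fintype.sum_prod_type]
          simp_rw [hmul]
          exact Finset.sum_comm
      _ ≤ ∑ q : n, ‖B‖ ^ 2 * ∑ j, ‖v (j, q)‖ ^ 2 :=
          Finset.sum_le_sum fun q _ => mulVec_sq_bound B _
      _ = ‖B‖ ^ 2 * ∑ p : k × n, ‖v p‖ ^ 2 := by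
          rw [← Finset.mul_sum, Fintype.sum_prod_type]
          rw [Finset.sum_comm]
  · refine norm_le_of_mulVec (norm_nonneg _) _ fun w => ?_
    set q0 : n := Classical.arbitrary n with hq0
    have hb := mulVec_sq_bound (B ⊗ₖ (1 : Matrix n n ℂ))
      (fun p : k × n => if p.2 = q0 then w p.1 else 0)
    calc ∑ i, ‖(B *ᵥ w) i‖ ^ 2
        = ∑ p : m × n, ‖((B ⊗ₖ (1 : Matrix n n ℂ)) *ᵥ
            fun p : k × n => if p.2 = q0 then w p.1 else 0) p‖ ^ 2 := by
          rw [Fintype.sum_prod_type]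
          simp_rw [hmul]
          rw [Finset.sum_comm]
          rw [Finset.sum_eq_single q0]
          · simp
          · intro q _ hq
            have hz : (fun j => if q = q0 then w j else (0 : ℂ)) = (0 : k → ℂ) :=
              funext fun j => if_neg hq
            rw [hz, Matrix.mulVec_zero]
            simp
          · intro hq; exact absurd (Finset.mem_univ q0) hq
      _ ≤ ‖B ⊗ₖ (1 : Matrix n n ℂ)‖ ^ 2 *
            ∑ p : k × n, ‖(if p.2 = q0 then w p.1 else 0 : ℂ)‖ ^ 2 := hb
      _ = ‖B ⊗ₖ (1 : Matrix n n ℂ)‖ ^ 2 * ∑ j, ‖w j‖ ^ 2 := by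
          congr 1
          rw [Fintype.sum_prod_type]
          refine Finset.sum_congr rfl fun j _ => ?_
          rw [Finset.sum_eq_single q0]
          · simp
          · intro q _ hq; simp [hq]
          · intro hq; exact absurd (Finset.mem_univ q0) hq

end Aux

/-- homogeneity lemma: if S_j = ∑_i B_{ij} T_i, then for any symmetric
(unitarily invariant) norm N on matrices,
‖∑_j S_j x S_j^*‖ ≤ ‖B‖²·‖∑_i T_i x T_i^*‖, where ‖B‖ is the ℓ²-operator norm. -/
theorem stmt_13 (n m k : ℕ) (B : Matrix (Fin m) (Fin k) ℂ)
    (T : Fin m → Matrix (Fin n) (Fin n) ℂ)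
    (S : Fin k → Matrix (Fin n) (Fin n) ℂ)
    (hSdef : ∀ j, S j = ∑ i : Fin m, B i j • T i)
    (x : Matrix (Fin n) (Fin n) ℂ) (hx : x.PosSemidef)
    (N : ∀ {d : Type} [inst : Fintype d] [inst2 : DecidableEq d], Matrix d d ℂ → ℝ)
    (hN_adj : ∀ {d d' : Type} [inst : Fintype d] [inst2 : DecidableEq d]
      [inst3 : Fintype d'] [inst4 : DecidableEq d']
      (A : Matrix d d' ℂ), N (A * Aᴴ) = N (Aᴴ * A))
    (hN_mul : ∀ {d d' : Type} [inst : Fintype d] [inst2 : DecidableEq d]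
      [inst3 : Fintype d'] [inst4 : DecidableEq d']
      (A : Matrix d d' ℂ) (X : Matrix d' d' ℂ) (Bm : Matrix d' d ℂ),
      N (A * X * Bm) ≤ ‖A‖ * N X * ‖Bm‖) :
    N (∑ j : Fin k, S j * x * (S j)ᴴ) ≤ ‖B‖ ^ 2 * N (∑ i : Fin m, T i * x * (T i)ᴴ) := by
  classical
  -- N vanishes on zero matrices
  have hzero1 : N (0 : Matrix (Fin 1) (Fin 1) ℂ) = 0 := by
    have hle : N (0 : Matrix (Fin 1) (Fin 1) ℂ) ≤ 0 := by
      have h := hN_mul (0 : Matrix (Fin 1) (Fin 1) ℂ) 0 0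
      simpa using h
    have hge : 0 ≤ N (0 : Matrix (Fin 1) (Fin 1) ℂ) := by
      have h := hN_mul ((2 : ℂ) • 1 : Matrix (Fin 1) (Fin 1) ℂ) 0 (1 : Matrix (Fin 1) (Fin 1) ℂ)
      have h1 : ‖(1 : Matrix (Fin 1) (Fin 1) ℂ)‖ = 1 := CStarRing.norm_one
      have h2 : ‖((2 : ℂ) • 1 : Matrix (Fin 1) (Fin 1) ℂ)‖ = 2 := by
        rw [norm_smul, h1]; simp
      rw [Matrix.mul_zero, Matrix.zero_mul, h1, h2] at h
      linarith
    linarith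
  have hNzero : ∀ {d : Type} [Fintype d] [DecidableEq d], N (0 : Matrix d d ℂ) = 0 := by
    intro d _ _
    have h := hN_adj (0 : Matrix d (Fin 1) ℂ)
    simp only [Matrix.conjTranspose_zero, Matrix.mul_zero, Matrix.zero_mul] at h
    rw [h, hzero1]
  by_cases hn0 : n = 0
  · subst hn0
    have hz : ∀ Y : Matrix (Fin 0) (Fin 0) ℂ, Y = 0 := fun Y => by
      ext i j; exact i.elim0
    rw [hz (∑ j : Fin k, S j * x * (S j)ᴴ), hz (∑ i : Fin m, T i * x * (T i)ᴴ), hNzero]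
    simp
  haveI : Nonempty (Fin n) := ⟨⟨0, Nat.pos_of_ne_zero hn0⟩⟩
  -- square root of x
  obtain ⟨y0, hy0⟩ : ∃ y0 : Matrix (Fin n) (Fin n) ℂ, x = star y0 * y0 := by
    open scoped MatrixOrder in exact CStarAlgebra.nonneg_iff_eq_star_mul_self.mp hx.nonneg
  set y : Matrix (Fin n) (Fin n) ℂ := y0ᴴ with hy
  have hyx : y * yᴴ = x := by
    rw [hy0, hy, Matrix.conjTranspose_conjTranspose]; rfl
  -- the key factorization matrices
  have key : ∀ {N' : ℕ} (R : Fin N' → Matrix (Fin n) (Fin n) ℂ),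
      ((Matrix.of fun p (jq : Fin N' × Fin n) => (R jq.1 * y) p jq.2) *
        (Matrix.of fun p (jq : Fin N' × Fin n) => (R jq.1 * y) p jq.2)ᴴ)
      = ∑ j, R j * x * (R j)ᴴ := by
    intro N' R
    have h1 : ∀ j, R j * x * (R j)ᴴ = (R j * y) * (R j * y)ᴴ := by
      intro j
      rw [Matrix.conjTranspose_mul, ← hyx]
      simp only [Matrix.mul_assoc]
    simp_rw [h1]
    ext p q
    simp only [Matrix.mul_apply, Matrix.conjTranspose_apply, Matrix.sum_apply,
      Matrix.of_apply, Fintype.sum_prod_type]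
    try refine Finset.sum_congr rfl fun j _ => Finset.sum_congr rfl fun r _ => ?_
    try (congr 1; exact Finset.sum_congr rfl fun s _ => mul_comm _ _)
  set C : Matrix (Fin n) (Fin k × Fin n) ℂ :=
    Matrix.of fun p (jq : Fin k × Fin n) => (S jq.1 * y) p jq.2 with hCdef
  set D : Matrix (Fin n) (Fin m × Fin n) ℂ :=
    Matrix.of fun p (iq : Fin m × Fin n) => (T iq.1 * y) p iq.2 with hDdef
  set M : Matrix (Fin m × Fin n) (Fin k × Fin n) ℂ := B ⊗ₖ (1 : Matrix (Fin n) (Fin n) ℂ)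
    with hMdef
  have hMnorm : ‖M‖ = ‖B‖ := kron_one_norm B
  have hDM : C = D * M := by
    ext p jq
    obtain ⟨j, q⟩ := jq
    simp only [hCdef, hDdef, hMdef, Matrix.of_apply, hSdef, Matrix.sum_mul,
      Matrix.smul_mul, Matrix.sum_apply, Matrix.smul_apply, smul_eq_mul,
      Matrix.mul_apply, Fintype.sum_prod_type, Matrix.kroneckerMap_apply,
      Matrix.one_apply, mul_ite, mul_one, mul_zero, ite_mul, zero_mul,
      Finset.sum_ite_eq, Finset.sum_ite_eq', Finset.mem_univ, if_true]
    simp only [Finset.sum_mul]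
    rw [Finset.sum_comm]
    exact Finset.sum_congr rfl fun i _ => Finset.sum_congr rfl fun r _ => by ring
  have hfact : Cᴴ * C = Mᴴ * (Dᴴ * D) * M := by
    rw [hDM]
    simp only [Matrix.conjTranspose_mul, Matrix.mul_assoc]
  calc N (∑ j : Fin k, S j * x * (S j)ᴴ)
      = N (C * Cᴴ) := by rw [hCdef, key S]
    _ = N (Cᴴ * C) := hN_adj C
    _ = N (Mᴴ * (Dᴴ * D) * M) := by rw [hfact]
    _ ≤ ‖Mᴴ‖ * N (Dᴴ * D) * ‖M‖ := hN_mul _ _ _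
    _ = ‖B‖ ^ 2 * N (Dᴴ * D) := by
        rw [Matrix.l2_opNorm_conjTranspose, hMnorm]; ring
    _ = ‖B‖ ^ 2 * N (D * Dᴴ) := by rw [hN_adj D]
    _ = ‖B‖ ^ 2 * N (∑ i : Fin m, T i * x * (T i)ᴴ) := by rw [hDdef, key T]
end

section
/- Let a, b be trace-class operators (or matrices) with polar decompositions a = u|a|, b = v|b|, and let T₁,…,T_k be matrices. Then |∑_i tr(a T_i b T_i^*)| ≤ tr(|a| ∑_i T_i v|b|v^* T_i^*)^{1/2} · tr(u|a|u^* ∑_i T_i |b| T_i^*)^{1/2}. -/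
open Matrix
open scoped ComplexOrder

/-- key Cauchy–Schwarz estimate in Lemma 3.1: for a = u|a|, b = v|b| polar
decompositions, |∑ tr(a T_i b T_i^*)| ≤ tr(|a| ∑ T_i v|b|v^* T_i^*)^{1/2} ·
tr(u|a|u^* ∑ T_i |b| T_i^*)^{1/2}. -/
theorem stmt_15 (n k : ℕ) (T : Fin k → Matrix (Fin n) (Fin n) ℂ)
    (a b u v absa absb : Matrix (Fin n) (Fin n) ℂ)
    (ha_abs : absa.PosSemidef) (hb_abs : absb.PosSemidef)
    (ha_sq : absa * absa = aᴴ * a) (hb_sq : absb * absb = bᴴ * b)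
    (hu : u * uᴴ * u = u) (hv : v * vᴴ * v = v)
    (ha_polar : a = u * absa) (hb_polar : b = v * absb) :
    ‖∑ i : Fin k, Matrix.trace (a * T i * b * (T i)ᴴ)‖
      ≤ Real.sqrt (Matrix.trace (absa * ∑ i : Fin k, T i * (v * absb * vᴴ) * (T i)ᴴ)).re
        * Real.sqrt (Matrix.trace ((u * absa * uᴴ) * ∑ i : Fin k, T i * absb * (T i)ᴴ)).re := by
  obtain ⟨SA, hSAh, hSA2⟩ : ∃ SA : Matrix (Fin n) (Fin n) ℂ, SAᴴ = SA ∧ SA * SA = absa :=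
    by
      open scoped MatrixOrder in
      obtain ⟨X, hX, -, hXe⟩ := CFC.exists_sqrt_of_isSelfAdjoint_of_quasispectrumRestricts
        ha_abs.isHermitian (QuasispectrumRestricts.nnreal_of_nonneg ha_abs.nonneg)
      exact ⟨X, hX.star_eq, hXe⟩
  obtain ⟨SB, hSBh, hSB2⟩ : ∃ SB : Matrix (Fin n) (Fin n) ℂ, SBᴴ = SB ∧ SB * SB = absb :=
    by
      open scoped MatrixOrder in
      obtain ⟨X, hX, -, hXe⟩ := CFC.exists_sqrt_of_isSelfAdjoint_of_quasispectrumRestricts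
        hb_abs.isHermitian (QuasispectrumRestricts.nnreal_of_nonneg hb_abs.nonneg)
      exact ⟨X, hX.star_eq, hXe⟩
  have hSA2' : ∀ M : Matrix (Fin n) (Fin n) ℂ, SA * (SA * M) = absa * M := fun M => by
    rw [← mul_assoc, hSA2]
  have hSB2' : ∀ M : Matrix (Fin n) (Fin n) ℂ, SB * (SB * M) = absb * M := fun M => by
    rw [← mul_assoc, hSB2]
  set X : Fin k → Matrix (Fin n) (Fin n) ℂ := fun i => SA * uᴴ * T i * SB with hX
  set Y : Fin k → Matrix (Fin n) (Fin n) ℂ := fun i => SA * T i * v * SB with hY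
  have hXH : ∀ i, (X i)ᴴ = SB * ((T i)ᴴ * (u * SA)) := fun i => by
    simp [hX, conjTranspose_mul, hSAh, hSBh, mul_assoc]
  have hYH : ∀ i, (Y i)ᴴ = SB * (vᴴ * ((T i)ᴴ * SA)) := fun i => by
    simp [hY, conjTranspose_mul, hSAh, hSBh, mul_assoc]
  -- per-index trace identities
  have key : ∀ i, Matrix.trace (a * T i * b * (T i)ᴴ) = Matrix.trace ((X i)ᴴ * Y i) := by
    intro i
    calc Matrix.trace (a * T i * b * (T i)ᴴ)
        = Matrix.trace ((T i)ᴴ * (u * (absa * (T i * (v * absb))))) := by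
          rw [Matrix.trace_mul_comm ((T i)ᴴ)]; congr 1; rw [ha_polar, hb_polar]
          simp only [mul_assoc]
      _ = Matrix.trace ((X i)ᴴ * Y i) := by
          rw [hXH i, mul_assoc SB ((T i)ᴴ * (u * SA)) (Y i),
            Matrix.trace_mul_comm SB (((T i)ᴴ * (u * SA)) * Y i)]
          congr 1
          simp only [hY, mul_assoc, hSA2', hSB2', hSA2, hSB2]
  have key2 : ∀ i, Matrix.trace (absa * (T i * (v * absb * vᴴ) * (T i)ᴴ))
      = Matrix.trace ((Y i)ᴴ * Y i) := by
    intro i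
    calc Matrix.trace (absa * (T i * (v * absb * vᴴ) * (T i)ᴴ))
        = Matrix.trace ((T i)ᴴ * (absa * (T i * (v * (absb * vᴴ))))) := by
          rw [Matrix.trace_mul_comm ((T i)ᴴ)]; congr 1; simp only [mul_assoc]
      _ = Matrix.trace (vᴴ * ((T i)ᴴ * (absa * (T i * (v * absb))))) := by
          rw [Matrix.trace_mul_comm vᴴ]; congr 1; simp only [mul_assoc]
      _ = Matrix.trace ((Y i)ᴴ * Y i) := by
          rw [hYH i, mul_assoc SB (vᴴ * ((T i)ᴴ * SA)) (Y i),
            Matrix.trace_mul_comm SB ((vᴴ * ((T i)ᴴ * SA)) * Y i)]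
          congr 1
          simp only [hY, mul_assoc, hSA2', hSB2', hSA2, hSB2]
  have key3 : ∀ i, Matrix.trace ((u * absa * uᴴ) * (T i * absb * (T i)ᴴ))
      = Matrix.trace ((X i)ᴴ * X i) := by
    intro i
    calc Matrix.trace ((u * absa * uᴴ) * (T i * absb * (T i)ᴴ))
        = Matrix.trace ((T i)ᴴ * (u * (absa * (uᴴ * (T i * absb))))) := by
          rw [Matrix.trace_mul_comm ((T i)ᴴ)]; congr 1; simp only [mul_assoc]
      _ = Matrix.trace ((X i)ᴴ * X i) := by
          rw [hXH i, mul_assoc SB ((T i)ᴴ * (u * SA)) (X i),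
            Matrix.trace_mul_comm SB (((T i)ᴴ * (u * SA)) * X i)]
          congr 1
          simp only [hX, mul_assoc, hSA2', hSB2', hSA2, hSB2]
  -- reduce the two RHS traces
  have fac1 : Matrix.trace (absa * ∑ i : Fin k, T i * (v * absb * vᴴ) * (T i)ᴴ)
      = ∑ i : Fin k, Matrix.trace ((Y i)ᴴ * Y i) := by
    rw [Matrix.mul_sum, Matrix.trace_sum]
    exact Finset.sum_congr rfl fun i _ => key2 i
  have fac2 : Matrix.trace ((u * absa * uᴴ) * ∑ i : Fin k, T i * absb * (T i)ᴴ)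
      = ∑ i : Fin k, Matrix.trace ((X i)ᴴ * X i) := by
    rw [Matrix.mul_sum, Matrix.trace_sum]
    exact Finset.sum_congr rfl fun i _ => key3 i
  -- Euclidean-space vectors (index order chosen to match the trace sum)
  set x : EuclideanSpace ℂ (Fin k × Fin n × Fin n) := WithLp.toLp 2 (fun p => X p.1 p.2.2 p.2.1) with hx
  set y : EuclideanSpace ℂ (Fin k × Fin n × Fin n) := WithLp.toLp 2 (fun p => Y p.1 p.2.2 p.2.1) with hy
  have hinner : (∑ i : Fin k, Matrix.trace ((X i)ᴴ * Y i)) = inner ℂ x y := by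
    simp only [PiLp.inner_apply, RCLike.inner_apply, hx, hy]
    rw [Fintype.sum_prod_type]
    refine Finset.sum_congr rfl fun i _ => ?_
    rw [Fintype.sum_prod_type]
    simp only [Matrix.trace, Matrix.diag, Matrix.mul_apply, Matrix.conjTranspose_apply,
      RCLike.star_def]
    exact Finset.sum_congr rfl fun _ _ => Finset.sum_congr rfl fun _ _ => mul_comm _ _
  have hnormsq : ∀ (Z : Fin k → Matrix (Fin n) (Fin n) ℂ)
      (z : EuclideanSpace ℂ (Fin k × Fin n × Fin n)),
      (∀ p : Fin k × Fin n × Fin n, z p = Z p.1 p.2.2 p.2.1) →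
      (∑ i : Fin k, Matrix.trace ((Z i)ᴴ * Z i)).re = ∑ p, ‖z p‖ ^ 2 := by
    intro Z z hz
    rw [Fintype.sum_prod_type]
    simp only [Matrix.trace, Matrix.diag, Matrix.mul_apply, Matrix.conjTranspose_apply]
    rw [Complex.re_sum]
    refine Finset.sum_congr rfl fun i _ => ?_
    rw [Fintype.sum_prod_type, Complex.re_sum]
    refine Finset.sum_congr rfl fun j _ => ?_
    rw [Complex.re_sum]
    refine Finset.sum_congr rfl fun p _ => ?_
    rw [hz (i, j, p)]
    rw [show (star (Z i p j) * Z i p j : ℂ) = Complex.normSq (Z i p j) by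
      simpa [mul_comm] using Complex.mul_conj (Z i p j)]
    rw [Complex.ofReal_re, Complex.normSq_eq_norm_sq]
  have hxnorm : Real.sqrt (Matrix.trace ((u * absa * uᴴ) * ∑ i : Fin k, T i * absb * (T i)ᴴ)).re
      = ‖x‖ := by
    rw [fac2, hnormsq X x (fun p => rfl), EuclideanSpace.norm_eq]
  have hynorm : Real.sqrt (Matrix.trace (absa * ∑ i : Fin k, T i * (v * absb * vᴴ) * (T i)ᴴ)).re
      = ‖y‖ := by
    rw [fac1, hnormsq Y y (fun p => rfl), EuclideanSpace.norm_eq]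
  calc ‖∑ i : Fin k, Matrix.trace (a * T i * b * (T i)ᴴ)‖
      = ‖(inner ℂ x y : ℂ)‖ := by
        rw [show (∑ i : Fin k, Matrix.trace (a * T i * b * (T i)ᴴ))
            = ∑ i : Fin k, Matrix.trace ((X i)ᴴ * Y i) from
          Finset.sum_congr rfl fun i _ => key i, hinner]
    _ ≤ ‖x‖ * ‖y‖ := norm_inner_le_norm x y
    _ = _ := by rw [← hxnorm, ← hynorm]; ring
end

section
/- Let Φ be a symmetric norming function satisfying (∗): ‖x⊗y‖_Φ ≤ c₁‖x‖_Φ‖y‖_Φ for all x, y in the ideal, and let p = lim_{n→∞} (log n)/(log ‖P_n‖_Φ) (which exists by the logarithmic-order lemma). Then ‖x‖_{Φ_p} ≤ c₁ ‖x‖_Φ for all x ∈ 𝔖_Φ, where Φ_p is the Schatten p-norm. Dually, if Φ satisfies (∗∗): ‖x⊗y‖_Φ ≥ c₂‖x‖_Φ‖y‖_Φ, then c₂‖x‖_Φ ≤ ‖x‖_{Φ_p}. In particular, if Φ is a cross norm (both hold with c₁ = c₂ = 1), then Φ = Φ_p. -/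
/-- A finitely supported nonincreasing nonnegative sequence. -/
def IsMonoSeq (x : ℕ → ℝ) : Prop :=
  Antitone x ∧ (∀ i, 0 ≤ x i) ∧ ∃ N, ∀ k, N ≤ k → x k = 0

/-- `z` is a rearrangement of the doubly indexed product family `(x_i·y_j)`. -/
def IsTensorRearrangement (x y z : ℕ → ℝ) : Prop :=
  ∃ e : ℕ ≃ ℕ × ℕ, ∀ k, z k = x (e k).1 * y (e k).2

lemma rearrange (w : ℕ → ℝ) (hw : ∀ k, 0 ≤ w k) (n : ℕ) (hn : ∀ k, n ≤ k → w k = 0) :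
    ∃ π : Equiv.Perm ℕ, Antitone (fun k => w (π k)) := by
  classical
  set σ : Equiv.Perm (Fin n) := Tuple.sort (fun i : Fin n => -w i) with hσ
  have hmono : Monotone ((fun i : Fin n => -w i) ∘ σ) := Tuple.monotone_sort _
  set π : Equiv.Perm ℕ := σ.extendDomain (Fin.equivSubtype (n := n)) with hπ
  have hlt : ∀ k (h : k < n), π k = (σ ⟨k, h⟩ : ℕ) := by
    intro k h
    have := Equiv.Perm.extendDomain_apply_subtype σ (Fin.equivSubtype (n := n)) (b := k) h
    rw [hπ]; simpa [Fin.equivSubtype] using this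
  have hge : ∀ k, n ≤ k → π k = k := by
    intro k h
    exact Equiv.Perm.extendDomain_apply_not_subtype σ _ (by omega)
  refine ⟨π, ?_⟩
  intro a b hab
  by_cases hb : b < n
  · have ha : a < n := lt_of_le_of_lt hab hb
    simp only []
    rw [hlt a ha, hlt b hb]
    have := hmono (a := ⟨a, ha⟩) (b := ⟨b, hb⟩) (by exact hab)
    simpa using this
  · simp only []
    rw [hge b (by omega), hn b (by omega)]
    exact hw _

lemma tensor_exists (x y : ℕ → ℝ) (hx : IsMonoSeq x) (hy : IsMonoSeq y) (N M : ℕ)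
    (hN : ∀ k, N ≤ k → x k = 0) (hM : ∀ k, M ≤ k → y k = 0) :
    ∃ z : ℕ → ℝ, IsMonoSeq z ∧ Antitone z ∧ (∀ k, 0 ≤ z k) ∧ IsTensorRearrangement x y z ∧
      (∀ k, N * M ≤ k → z k = 0) ∧
      ∀ q : ℝ, 0 < q → ∑' k, z k ^ q = (∑' k, x k ^ q) * (∑' k, y k ^ q) := by
  classical
  set f : ℕ ≃ ℕ × ℕ := (Denumerable.eqv (ℕ × ℕ)).symm with hf
  set w : ℕ → ℝ := fun k => x (f k).1 * y (f k).2 with hwdef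
  have hwnn : ∀ k, 0 ≤ w k := fun k => mul_nonneg (hx.2.1 _) (hy.2.1 _)
  have hw0 : ∀ k, w k ≠ 0 → (f k).1 < N ∧ (f k).2 < M := by
    intro k hk
    constructor
    · by_contra h
      exact hk (by simp [hwdef, hN _ (le_of_not_gt h)])
    · by_contra h
      exact hk (by simp [hwdef, hM _ (le_of_not_gt h)])
  set T : Finset ℕ := (Finset.range N ×ˢ Finset.range M).image f.symm with hT
  have hn' : ∀ k, T.sup id + 1 ≤ k → w k = 0 := by
    intro k hk
    by_contra h
    have hmem : k ∈ T := by
      rw [hT, Finset.mem_image]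
      refine ⟨f k, ?_, f.symm_apply_apply k⟩
      rw [Finset.mem_product]
      exact ⟨Finset.mem_range.2 (hw0 k h).1, Finset.mem_range.2 (hw0 k h).2⟩
    have := Finset.le_sup (f := id) hmem
    simp only [id] at this
    omega
  obtain ⟨π, hπ⟩ := rearrange w hwnn (T.sup id + 1) hn'
  set z : ℕ → ℝ := fun k => w (π k) with hzdef
  have hznn : ∀ k, 0 ≤ z k := fun k => hwnn _
  have hzsup : ∀ k, N * M ≤ k → z k = 0 := by
    have h0 : z (N * M) = 0 := by
      by_contra h
      have hpos : 0 < z (N * M) := lt_of_le_of_ne (hznn _) (Ne.symm h)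
      have hall : ∀ j ∈ Finset.range (N * M + 1), f (π j) ∈ Finset.range N ×ˢ Finset.range M := by
        intro j hj
        have hj' : j ≤ N * M := by simpa [Nat.lt_succ_iff] using hj
        have : 0 < z j := lt_of_lt_of_le hpos (hπ hj')
        have hne : w (π j) ≠ 0 := ne_of_gt this
        rw [Finset.mem_product]
        exact ⟨Finset.mem_range.2 (hw0 _ hne).1, Finset.mem_range.2 (hw0 _ hne).2⟩
      have hinj : Set.InjOn (fun j => f (π j)) (Finset.range (N * M + 1)) := by
        intro a _ b _ hab
        exact π.injective (f.injective hab)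
      have := Finset.card_le_card_of_injOn _ hall hinj
      simp only [Finset.card_range, Finset.card_product] at this
      omega
    intro k hk
    exact le_antisymm (h0 ▸ hπ hk) (hznn k)
  refine ⟨z, ⟨hπ, hznn, N * M, hzsup⟩, hπ, hznn, ⟨π.trans f, fun k => rfl⟩, hzsup, ?_⟩
  intro q hq
  have hq0 : (0 : ℝ) ^ q = 0 := Real.zero_rpow hq.ne'
  have e1 : ∑' k, z k ^ q = ∑' k, w k ^ q := Equiv.tsum_eq π (fun k => w k ^ q)
  have e2 : ∑' k, w k ^ q = ∑' ij : ℕ × ℕ, (x ij.1 * y ij.2) ^ q :=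
    Equiv.tsum_eq f (fun ij => (x ij.1 * y ij.2) ^ q)
  have e3 : ∑' ij : ℕ × ℕ, (x ij.1 * y ij.2) ^ q
      = ∑ ij ∈ Finset.range N ×ˢ Finset.range M, (x ij.1 * y ij.2) ^ q := by
    apply tsum_eq_sum
    intro ij hij
    rw [Finset.mem_product] at hij
    push_neg at hij
    by_cases h1 : ij.1 ∈ Finset.range N
    · have : M ≤ ij.2 := by
        have := hij h1; simpa using this
      rw [hM _ this, mul_zero, hq0]
    · have : N ≤ ij.1 := by simpa using h1
      rw [hN _ this, zero_mul, hq0]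
  have e4 : ∑ ij ∈ Finset.range N ×ˢ Finset.range M, (x ij.1 * y ij.2) ^ q
      = (∑ i ∈ Finset.range N, x i ^ q) * ∑ j ∈ Finset.range M, y j ^ q := by
    rw [Finset.sum_mul_sum]
    rw [Finset.sum_product]
    congr 1; funext i; congr 1; funext j
    exact Real.mul_rpow (hx.2.1 _) (hy.2.1 _)
  have e5 : ∑' k, x k ^ q = ∑ i ∈ Finset.range N, x i ^ q := by
    apply tsum_eq_sum
    intro i hi
    rw [hN _ (by simpa using hi), hq0]
  have e6 : ∑' k, y k ^ q = ∑ j ∈ Finset.range M, y j ^ q := by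
    apply tsum_eq_sum
    intro j hj
    rw [hM _ (by simpa using hj), hq0]
  rw [e1, e2, e3, e4, e5, e6]

section Phi

variable (Φ : (ℕ → ℝ) → ℝ)

/-- Φ of the indicator of `n` ones. -/
noncomputable def phiN (n : ℕ) : ℝ := Φ (fun k => if k < n then 1 else 0)

lemma ind_mono (n : ℕ) : IsMonoSeq (fun k => if k < n then 1 else 0) := by
  refine ⟨?_, ?_, n, ?_⟩
  · intro a b hab
    by_cases hb : b < n
    · simp [hb, lt_of_le_of_lt hab hb]
    · simp only [hb, if_false]
      positivity
  · intro i; positivity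
  · intro k hk; simp [Nat.not_lt.2 hk]

lemma const_ind_mono (c : ℝ) (hc : 0 ≤ c) (n : ℕ) :
    IsMonoSeq (fun k => if k < n then c else 0) := by
  refine ⟨?_, ?_, n, ?_⟩
  · intro a b hab
    by_cases hb : b < n
    · simp [hb, lt_of_le_of_lt hab hb]
    · simp only [hb, if_false]
      positivity
  · intro i; positivity
  · intro k hk; simp [Nat.not_lt.2 hk]

variable (h_smul : ∀ (c : ℝ), 0 ≤ c → ∀ x : ℕ → ℝ, Φ (fun k => c * x k) = c * Φ x)
variable (h_mono : ∀ x y : ℕ → ℝ, IsMonoSeq x → IsMonoSeq y → (∀ k, x k ≤ y k) → Φ x ≤ Φ y)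
variable (h_norm : Φ (fun k => if k = 0 then 1 else 0) = 1)
variable (h_add : ∀ x y : ℕ → ℝ, Φ (x + y) ≤ Φ x + Φ y)
include h_smul h_mono h_norm h_add
set_option linter.unusedSectionVars false

lemma Phi_zero : Φ (fun _ => 0) = 0 := by
  have := h_smul 0 le_rfl (fun _ => 0)
  simpa using this

lemma Phi_nonneg (x : ℕ → ℝ) (hx : IsMonoSeq x) : 0 ≤ Φ x := by
  have h0 : IsMonoSeq (fun _ => 0) := ⟨fun _ _ _ => le_rfl, fun _ => le_rfl, 0, fun _ _ => rfl⟩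
  have := h_mono (fun _ => 0) x h0 hx (fun k => hx.2.1 k)
  rw [Phi_zero Φ h_smul h_mono h_norm h_add] at this
  exact this

lemma Phi_const_ind (c : ℝ) (hc : 0 ≤ c) (n : ℕ) :
    Φ (fun k => if k < n then c else 0) = c * phiN Φ n := by
  have : (fun k => if k < n then c else 0) = fun k => c * (if k < n then 1 else 0) := by
    funext k; by_cases h : k < n <;> simp [h]
  rw [this, h_smul c hc]
  rfl

lemma phiN_mono (n m : ℕ) (hnm : n ≤ m) : phiN Φ n ≤ phiN Φ m := by
  apply h_mono _ _ (ind_mono n) (ind_mono m)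
  intro k
  by_cases h : k < n
  · simp [h, lt_of_lt_of_le h hnm]
  · simp only [h, if_false]
    positivity

lemma phiN_one : phiN Φ 1 = 1 := by
  rw [phiN]
  have : (fun k => if k < 1 then (1:ℝ) else 0) = fun k => if k = 0 then 1 else 0 := by
    funext k; simp [Nat.lt_one_iff]
  rw [this, h_norm]

lemma phiN_one_le (n : ℕ) (hn : 1 ≤ n) : 1 ≤ phiN Φ n := by
  rw [← phiN_one Φ h_smul h_mono h_norm h_add]
  exact phiN_mono Φ h_smul h_mono h_norm h_add 1 n hn

/-- key lower bound: `z k · φ(k+1) ≤ Φ z` for monotone `z`. -/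
lemma Phi_lower (z : ℕ → ℝ) (hz : IsMonoSeq z) (k : ℕ) :
    z k * phiN Φ (k + 1) ≤ Φ z := by
  have hzk : 0 ≤ z k := hz.2.1 k
  have h1 : Φ (fun j => if j < k + 1 then z k else 0) = z k * phiN Φ (k + 1) :=
    Phi_const_ind Φ h_smul h_mono h_norm h_add (z k) hzk (k + 1)
  rw [← h1]
  apply h_mono _ _ (const_ind_mono (z k) hzk (k + 1)) hz
  intro j
  by_cases h : j < k + 1
  · simp only [h, if_true]
    exact hz.1 (by omega)
  · simp only [h, if_false]
    exact hz.2.1 j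

lemma Phi_sum_le {ι : Type*} (s : Finset ι) (g : ι → ℕ → ℝ) :
    Φ (fun k => ∑ r ∈ s, g r k) ≤ ∑ r ∈ s, Φ (g r) := by
  classical
  induction s using Finset.induction_on with
  | empty => simp [Phi_zero Φ h_smul h_mono h_norm h_add]
  | insert a s hnotmem ih =>
    have heq : (fun k => ∑ r ∈ insert a s, g r k) = g a + fun k => ∑ r ∈ s, g r k := by
      funext k
      simp [Finset.sum_insert hnotmem]
    rw [heq, Finset.sum_insert hnotmem]
    exact le_trans (h_add _ _) (by linarith [ih])

end Phi

open Filter Real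

lemma harmonic_le (K : ℕ) : ∑ k ∈ Finset.range K, (1:ℝ)/(k+1) ≤ 1 + Real.log K := by
  induction K with
  | zero => simp
  | succ K ih =>
    rw [Finset.sum_range_succ]
    rcases Nat.eq_zero_or_pos K with hK | hK
    · subst hK; simp
    · have hKpos : (0:ℝ) < K := by exact_mod_cast hK
      have key : (1:ℝ)/(K+1) ≤ Real.log (K+1) - Real.log K := by
        have h1 := Real.log_le_sub_one_of_pos (x := (K:ℝ)/(K+1)) (by positivity)
        rw [Real.log_div (ne_of_gt hKpos) (by positivity)] at h1
        have h2 : (K:ℝ)/(K+1) - 1 = -(1/(K+1)) := by field_simp; ring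
        rw [h2] at h1
        linarith
      have : ((K:ℝ)+1) = ((K+1 : ℕ):ℝ) := by push_cast; ring
      rw [this] at key
      push_cast at key ⊢
      linarith

lemma mroot_limit (E B D : ℝ) (hB : 0 ≤ B) (hD : 1 ≤ D)
    (h : ∀ m : ℕ, 1 ≤ m → E ≤ B * ((m : ℝ) * D) ^ ((m:ℝ)⁻¹)) : E ≤ B := by
  have hDpos : (0:ℝ) < D := lt_of_lt_of_le one_pos hD
  have hlog : Tendsto (fun m : ℕ => Real.log ((m:ℝ) * D) * ((m:ℝ))⁻¹) atTop (nhds 0) := by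
    have h1 : Tendsto (fun m : ℕ => Real.log m / m) atTop (nhds 0) :=
      (Real.isLittleO_log_id_atTop.tendsto_div_nhds_zero).comp tendsto_natCast_atTop_atTop
    have h2 : Tendsto (fun m : ℕ => Real.log D / m) atTop (nhds 0) :=
      tendsto_const_nhds.div_atTop tendsto_natCast_atTop_atTop
    have h3 := h1.add h2
    rw [add_zero] at h3
    apply h3.congr'
    filter_upwards [eventually_ge_atTop 1] with m hm
    have hm0 : ((m:ℝ)) ≠ 0 := by positivity
    rw [Real.log_mul hm0 (ne_of_gt hDpos), add_mul]
    rw [div_eq_mul_inv, div_eq_mul_inv]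
  have hexp : Tendsto (fun m : ℕ => Real.exp (Real.log ((m:ℝ) * D) * (m:ℝ)⁻¹)) atTop (nhds 1) := by
    have := Real.continuous_exp.continuousAt.tendsto.comp hlog
    simpa [Function.comp_def] using this
  have hT : Tendsto (fun m : ℕ => B * ((m:ℝ)*D) ^ ((m:ℝ)⁻¹)) atTop (nhds B) := by
    have h4 := tendsto_const_nhds (x := B) (f := atTop (α := ℕ)) |>.mul hexp
    rw [mul_one] at h4
    apply h4.congr'
    filter_upwards [eventually_ge_atTop 1] with m hm
    have hmpos : (0:ℝ) < m := by positivity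
    rw [Real.rpow_def_of_pos (mul_pos hmpos hDpos)]
  exact ge_of_tendsto hT (by filter_upwards [eventually_ge_atTop 1] with m hm using h m hm)

lemma phi_ratio (φ : ℕ → ℝ) (p : ℝ) (hp : 1 ≤ p)
    (hlim : Tendsto (fun n : ℕ => Real.log n / Real.log (φ n)) atTop (nhds p)) :
    Tendsto (fun n : ℕ => Real.log (φ n) / Real.log n) atTop (nhds p⁻¹) := by
  have hp0 : p ≠ 0 := by positivity
  have := hlim.inv₀ hp0
  apply this.congr
  intro n
  rw [inv_div]

set_option maxHeartbeats 2000000 in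
lemma aux_upper (Φ : (ℕ → ℝ) → ℝ) (c : ℝ) (hc : 0 < c)
    (h_norm : Φ (fun k => if k = 0 then 1 else 0) = 1)
    (h_add : ∀ x y : ℕ → ℝ, Φ (x + y) ≤ Φ x + Φ y)
    (h_smul : ∀ (c : ℝ), 0 ≤ c → ∀ x : ℕ → ℝ, Φ (fun k => c * x k) = c * Φ x)
    (h_mono : ∀ x y : ℕ → ℝ, IsMonoSeq x → IsMonoSeq y → (∀ k, x k ≤ y k) → Φ x ≤ Φ y)
    (p : ℝ) (hp : 1 ≤ p)
    (hlim : Filter.Tendsto (fun n : ℕ => Real.log n / Real.log (phiN Φ n))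
      Filter.atTop (nhds p))
    (H : ∀ x y z : ℕ → ℝ, IsMonoSeq x → IsMonoSeq y → Antitone z → (∀ k, 0 ≤ z k) →
        IsTensorRearrangement x y z → Φ z ≤ c * Φ x * Φ y) :
    ∀ x : ℕ → ℝ, IsMonoSeq x → (∑' k : ℕ, x k ^ p) ^ (1 / p) ≤ c * Φ x := by
  intro x hx
  have hp0 : (0:ℝ) < p := lt_of_lt_of_le one_pos hp
  have hΦnn : ∀ y : ℕ → ℝ, IsMonoSeq y → 0 ≤ Φ y :=
    Phi_nonneg Φ h_smul h_mono h_norm h_add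
  have hφ1 : ∀ n : ℕ, 1 ≤ n → 1 ≤ phiN Φ n :=
    phiN_one_le Φ h_smul h_mono h_norm h_add
  by_cases hx0 : x 0 = 0
  · have hxz : ∀ k, x k = 0 := fun k =>
      le_antisymm (hx0 ▸ hx.1 (Nat.zero_le k)) (hx.2.1 k)
    have hz : (fun k : ℕ => x k ^ p) = fun _ => 0 := funext fun k => by
      rw [hxz k]; exact Real.zero_rpow hp0.ne'
    rw [hz, tsum_zero, Real.zero_rpow (by positivity : (1:ℝ)/p ≠ 0)]
    exact mul_nonneg hc.le (hΦnn x hx)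
  have hx0' : 0 < x 0 := lt_of_le_of_ne (hx.2.1 0) (Ne.symm hx0)
  have hΦx : 0 < Φ x := by
    have h1 := Phi_lower Φ h_smul h_mono h_norm h_add x hx 0
    rw [phiN_one Φ h_smul h_mono h_norm h_add, mul_one] at h1
    exact lt_of_lt_of_le hx0' h1
  obtain ⟨N₀, hN₀⟩ := hx.2.2
  set N : ℕ := N₀ + 1 with hNdef
  have hNsup : ∀ k, N ≤ k → x k = 0 := fun k hk => hN₀ k (by omega)
  have hN1 : 1 ≤ N := by omega
  have hNr1 : (1:ℝ) ≤ (N:ℝ) := by exact_mod_cast hN1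
  set S : ℝ := ∑' k : ℕ, x k ^ p with hSdef
  have hS_eq : S = ∑ k ∈ Finset.range N, x k ^ p := by
    apply tsum_eq_sum
    intro k hk
    rw [hNsup k (by simpa using hk)]
    exact Real.zero_rpow hp0.ne'
  have hSnn : 0 ≤ S := by
    rw [hS_eq]
    exact Finset.sum_nonneg fun k _ => Real.rpow_nonneg (hx.2.1 k) p
  set A : ℝ := c * Φ x with hAdef
  have hA : 0 < A := mul_pos hc hΦx
  -- tensor powers
  have hpow : ∀ m : ℕ, 1 ≤ m → ∃ X : ℕ → ℝ, IsMonoSeq X ∧ (∀ k, N ^ m ≤ k → X k = 0) ∧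
      (∑' k : ℕ, X k ^ p) = S ^ m ∧ c * Φ X ≤ A ^ m := by
    intro m hm
    induction m, hm using Nat.le_induction with
    | base =>
      exact ⟨x, hx, by simpa using hNsup, by rw [pow_one], by rw [pow_one]⟩
    | succ m hm ih =>
      obtain ⟨X, hXmono, hXsup, hXsum, hXΦ⟩ := ih
      obtain ⟨z, hzmono, hzanti, hznn, hzrearr, hzsup, hzsum⟩ :=
        tensor_exists X x hXmono hx (N ^ m) N hXsup hNsup
      refine ⟨z, hzmono, ?_, ?_, ?_⟩
      · intro k hk
        exact hzsup k (by rw [← pow_succ]; exact hk)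
      · rw [hzsum p hp0, hXsum, ← hSdef, pow_succ]
      · have h1 := H X x z hXmono hx hzanti hznn hzrearr
        have h2 : c * Φ z ≤ c * (c * Φ X * Φ x) := mul_le_mul_of_nonneg_left h1 hc.le
        have h3 : c * (c * Φ X * Φ x) = (c * Φ X) * (c * Φ x) := by ring
        have h4 : (c * Φ X) * (c * Φ x) ≤ A ^ m * A := by
          apply mul_le_mul hXΦ le_rfl (mul_nonneg hc.le (hΦnn x hx)) (by positivity)
        calc c * Φ z ≤ c * (c * Φ X * Φ x) := h2
          _ = (c * Φ X) * (c * Φ x) := h3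
          _ ≤ A ^ m * A := h4
          _ = A ^ (m + 1) := (pow_succ A m).symm
  have hL := phi_ratio (phiN Φ) p hp hlim
  -- key bound for each δ
  have key : ∀ δ : ℝ, 0 < δ → δ < 1 → S ≤ A ^ p * (N:ℝ) ^ δ := by
    intro δ hδ0 hδ1
    have h1 : (1 - δ)/p < p⁻¹ := by
      rw [inv_eq_one_div]
      exact div_lt_div_of_pos_right (by linarith) hp0
    have hev : ∀ᶠ n : ℕ in Filter.atTop,
        (1 - δ) / p * Real.log n ≤ Real.log (phiN Φ n) := by
      filter_upwards [hL.eventually (eventually_gt_nhds h1), Filter.eventually_ge_atTop 2]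
        with n hn h2n
      have hlogn : 0 < Real.log n := Real.log_pos (by exact_mod_cast h2n)
      calc (1 - δ)/p * Real.log n ≤ (Real.log (phiN Φ n) / Real.log n) * Real.log n :=
            mul_le_mul_of_nonneg_right hn.le hlogn.le
        _ = Real.log (phiN Φ n) := div_mul_cancel₀ _ hlogn.ne'
    obtain ⟨n₀, hn₀⟩ := Filter.eventually_atTop.1 hev
    set L : ℝ := Real.log N with hLdef
    have hL0 : 0 ≤ L := Real.log_nonneg hNr1
    have hcp : (0:ℝ) < c ^ p := Real.rpow_pos_of_pos hc p
    set D : ℝ := max 1 (((n₀:ℝ) + 1 + L) / c ^ p) with hDdef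
    have hD1 : 1 ≤ D := le_max_left _ _
    have hDc : (n₀:ℝ) + 1 + L ≤ D * c ^ p := by
      rw [← div_le_iff₀ hcp]
      exact le_max_right _ _
    apply mroot_limit S (A ^ p * (N:ℝ) ^ δ) D (by positivity) hD1
    intro m hm
    have hm0 : m ≠ 0 := by omega
    have hmr : (1:ℝ) ≤ (m:ℝ) := by exact_mod_cast hm
    obtain ⟨X, hXmono, hXsup, hXsum, hXΦ⟩ := hpow m hm
    set K : ℕ := N ^ m with hKdef
    have hK1 : 1 ≤ K := Nat.one_le_pow _ _ (by omega)
    have hKr : (0:ℝ) < (K:ℝ) := by exact_mod_cast hK1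
    -- per-term bound
    have hterm : ∀ k ∈ Finset.range K, X k ^ p ≤
        (A ^ p) ^ m / c ^ p *
          ((if k + 1 < n₀ then (1:ℝ) else 0) + ((k:ℝ)+1) ^ δ / ((k:ℝ)+1)) := by
      intro k _
      have hk1r : (0:ℝ) < (k:ℝ) + 1 := by positivity
      have hφpos : (0:ℝ) < phiN Φ (k+1) := lt_of_lt_of_le one_pos (hφ1 (k+1) (by omega))
      have hXk := Phi_lower Φ h_smul h_mono h_norm h_add X hXmono k
      have hXk' : X k ≤ A ^ m / (c * phiN Φ (k+1)) := by
        rw [le_div_iff₀ (by positivity)]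
        nlinarith [hXmono.2.1 k]
      have hXkp : X k ^ p ≤ (A ^ m / (c * phiN Φ (k+1))) ^ p :=
        Real.rpow_le_rpow (hXmono.2.1 k) hXk' hp0.le
      have hAmp : (A ^ m : ℝ) ^ p = (A ^ p) ^ m := by
        rw [← Real.rpow_natCast A m, ← Real.rpow_natCast (A ^ p) m,
          ← Real.rpow_mul hA.le, ← Real.rpow_mul hA.le, mul_comm]
      have hsplit : (A ^ m / (c * phiN Φ (k+1))) ^ p
          = (A ^ p) ^ m / (c ^ p * phiN Φ (k+1) ^ p) := by
        rw [Real.div_rpow (by positivity) (by positivity),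
          Real.mul_rpow hc.le hφpos.le, hAmp]
      rw [hsplit] at hXkp
      have hφp1 : (1:ℝ) ≤ phiN Φ (k+1) ^ p :=
        Real.one_le_rpow (hφ1 (k+1) (by omega)) hp0.le
      have hQ : (0:ℝ) ≤ (A ^ p) ^ m := by positivity
      have ht0 : (0:ℝ) ≤ ((k:ℝ)+1) ^ δ / ((k:ℝ)+1) := by positivity
      by_cases hcase : k + 1 < n₀
      · simp only [hcase, if_true]
        have h5 : (A ^ p) ^ m / (c ^ p * phiN Φ (k+1) ^ p) ≤ (A ^ p) ^ m / c ^ p := by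
          apply div_le_div_of_nonneg_left hQ hcp
          exact le_mul_of_one_le_right hcp.le hφp1
        calc X k ^ p ≤ (A ^ p) ^ m / (c ^ p * phiN Φ (k+1) ^ p) := hXkp
          _ ≤ (A ^ p) ^ m / c ^ p := h5
          _ = (A ^ p) ^ m / c ^ p * 1 := (mul_one _).symm
          _ ≤ _ := by
              apply mul_le_mul_of_nonneg_left _ (by positivity)
              linarith
      · simp only [hcase, if_false, zero_add]
        have hkn₀ : n₀ ≤ k + 1 := by omega
        have hlow := hn₀ (k+1) hkn₀
        have hcast : ((k+1 : ℕ):ℝ) = (k:ℝ) + 1 := by push_cast; ring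
        rw [hcast] at hlow
        have hφplow : ((k:ℝ)+1) ^ (1 - δ) ≤ phiN Φ (k+1) ^ p := by
          rw [Real.rpow_def_of_pos hk1r, Real.rpow_def_of_pos hφpos]
          apply Real.exp_le_exp.2
          calc Real.log ((k:ℝ)+1) * (1 - δ) = (1 - δ)/p * Real.log ((k:ℝ)+1) * p := by
                field_simp
            _ ≤ Real.log (phiN Φ (k+1)) * p := by
                apply mul_le_mul_of_nonneg_right hlow hp0.le
        have hpow1δ : (0:ℝ) < ((k:ℝ)+1) ^ (1 - δ) := Real.rpow_pos_of_pos hk1r _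
        have h6 : (A ^ p) ^ m / (c ^ p * phiN Φ (k+1) ^ p)
            ≤ (A ^ p) ^ m / (c ^ p * ((k:ℝ)+1) ^ (1 - δ)) := by
          apply div_le_div_of_nonneg_left hQ (by positivity)
          exact mul_le_mul_of_nonneg_left hφplow hcp.le
        have h7 : (A ^ p) ^ m / (c ^ p * ((k:ℝ)+1) ^ (1 - δ))
            = (A ^ p) ^ m / c ^ p * (((k:ℝ)+1) ^ δ / ((k:ℝ)+1)) := by
          have e1 : ((k:ℝ)+1) ^ δ / ((k:ℝ)+1) = ((k:ℝ)+1) ^ (δ - 1) := by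
            rw [Real.rpow_sub hk1r, Real.rpow_one]
          have e2 : (((k:ℝ)+1) ^ (1 - δ))⁻¹ = ((k:ℝ)+1) ^ (δ - 1) := by
            rw [← Real.rpow_neg hk1r.le]
            norm_num
          rw [div_mul_eq_div_div, div_eq_mul_inv ((A ^ p) ^ m / c ^ p), e2, e1]
        rw [h7] at h6
        exact le_trans hXkp h6
    -- sum the bound
    have hXsum' : S ^ m = ∑ k ∈ Finset.range K, X k ^ p := by
      rw [← hXsum]
      apply tsum_eq_sum
      intro k hk
      rw [hXsup k (by simpa using hk)]
      exact Real.zero_rpow hp0.ne'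
    have hsum1 : ∑ k ∈ Finset.range K, (if k + 1 < n₀ then (1:ℝ) else 0) ≤ (n₀:ℝ) := by
      rw [Finset.sum_boole]
      have hsub : (Finset.range K).filter (fun k => k + 1 < n₀) ⊆ Finset.range n₀ := by
        intro k hk
        simp only [Finset.mem_filter, Finset.mem_range] at hk ⊢
        omega
      have := Finset.card_le_card hsub
      rw [Finset.card_range] at this
      exact_mod_cast this
    have hsum2 : ∑ k ∈ Finset.range K, ((k:ℝ)+1) ^ δ / ((k:ℝ)+1)
        ≤ (K:ℝ) ^ δ * (1 + Real.log K) := by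
      have hstep : ∀ k ∈ Finset.range K, ((k:ℝ)+1) ^ δ / ((k:ℝ)+1)
          ≤ (K:ℝ) ^ δ * (1/((k:ℝ)+1)) := by
        intro k hk
        have hkK : (k:ℝ) + 1 ≤ (K:ℝ) := by
          have : k + 1 ≤ K := Finset.mem_range.1 hk
          exact_mod_cast this
        rw [mul_one_div]
        apply div_le_div_of_nonneg_right ?_ (by positivity)
        exact Real.rpow_le_rpow (by positivity) hkK hδ0.le
      calc ∑ k ∈ Finset.range K, ((k:ℝ)+1) ^ δ / ((k:ℝ)+1)
          ≤ ∑ k ∈ Finset.range K, (K:ℝ) ^ δ * (1/((k:ℝ)+1)) := Finset.sum_le_sum hstep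
        _ = (K:ℝ) ^ δ * ∑ k ∈ Finset.range K, 1/((k:ℝ)+1) := by rw [Finset.mul_sum]
        _ ≤ (K:ℝ) ^ δ * (1 + Real.log K) :=
            mul_le_mul_of_nonneg_left (harmonic_le K) (by positivity)
    have hXsum' : S ^ m = ∑ k ∈ Finset.range K, X k ^ p := by
      rw [← hXsum]
      apply tsum_eq_sum
      intro k hk
      rw [hXsup k (by simpa using hk)]
      exact Real.zero_rpow hp0.ne'
    have hKcast : ((K:ℕ):ℝ) = (N:ℝ) ^ m := by
      rw [hKdef]; push_cast; ring
    have hKδ : ((K:ℕ):ℝ) ^ δ = ((N:ℝ) ^ δ) ^ m := by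
      rw [hKcast, ← Real.rpow_natCast (N:ℝ) m, ← Real.rpow_natCast ((N:ℝ) ^ δ) m,
        ← Real.rpow_mul (by positivity), ← Real.rpow_mul (by positivity), mul_comm]
    have hlogK : Real.log K = (m:ℝ) * L := by
      rw [hKcast, Real.log_pow, hLdef]
    have hmain : S ^ m ≤ (A ^ p) ^ m / c ^ p *
        ((n₀:ℝ) + ((N:ℝ) ^ δ) ^ m * (1 + (m:ℝ) * L)) := by
      rw [hXsum']
      calc ∑ k ∈ Finset.range K, X k ^ p
          ≤ ∑ k ∈ Finset.range K, (A ^ p) ^ m / c ^ p *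
              ((if k + 1 < n₀ then (1:ℝ) else 0) + ((k:ℝ)+1) ^ δ / ((k:ℝ)+1)) :=
            Finset.sum_le_sum hterm
        _ = (A ^ p) ^ m / c ^ p *
              (∑ k ∈ Finset.range K, (if k + 1 < n₀ then (1:ℝ) else 0)
                + ∑ k ∈ Finset.range K, ((k:ℝ)+1) ^ δ / ((k:ℝ)+1)) := by
            rw [← Finset.mul_sum, Finset.sum_add_distrib]
        _ ≤ (A ^ p) ^ m / c ^ p * ((n₀:ℝ) + (K:ℝ) ^ δ * (1 + Real.log K)) :=
            mul_le_mul_of_nonneg_left (add_le_add hsum1 hsum2) (by positivity)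
        _ = _ := by rw [hKδ, hlogK]
    set B : ℝ := (N:ℝ) ^ δ with hBdef
    have hB1 : (1:ℝ) ≤ B ^ m := one_le_pow₀ (Real.one_le_rpow hNr1 hδ0.le)
    have hn0r : (0:ℝ) ≤ (n₀:ℝ) := Nat.cast_nonneg _
    have hstep2 : ((n₀:ℝ) + B ^ m * (1 + (m:ℝ) * L)) / c ^ p ≤ B ^ m * ((m:ℝ) * D) := by
      rw [div_le_iff₀ hcp]
      have hkey := mul_le_mul_of_nonneg_left hDc
        (by positivity : (0:ℝ) ≤ B ^ m * (m:ℝ))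
      nlinarith [mul_nonneg (sub_nonneg.2 hB1) hn0r, mul_nonneg (sub_nonneg.2 hmr) hL0,
        mul_nonneg (sub_nonneg.2 hB1) (mul_nonneg (sub_nonneg.2 hmr) hL0),
        mul_nonneg (sub_nonneg.2 hB1) (sub_nonneg.2 hmr),
        mul_nonneg (mul_nonneg (sub_nonneg.2 hB1) (sub_nonneg.2 hmr)) hn0r]
    have hBm : S ^ m ≤ (A ^ p * B) ^ m * ((m:ℝ) * D) := by
      rw [mul_pow]
      calc S ^ m ≤ (A ^ p) ^ m / c ^ p * ((n₀:ℝ) + B ^ m * (1 + (m:ℝ) * L)) := hmain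
        _ = (A ^ p) ^ m * (((n₀:ℝ) + B ^ m * (1 + (m:ℝ) * L)) / c ^ p) := by ring
        _ ≤ (A ^ p) ^ m * (B ^ m * ((m:ℝ) * D)) :=
            mul_le_mul_of_nonneg_left hstep2 (by positivity)
        _ = (A ^ p) ^ m * B ^ m * ((m:ℝ) * D) := by ring
    have hmD : (0:ℝ) ≤ (m:ℝ) * D := by positivity
    calc S = (S ^ m) ^ ((m:ℝ)⁻¹) := (Real.pow_rpow_inv_natCast hSnn hm0).symm
      _ ≤ ((A ^ p * B) ^ m * ((m:ℝ) * D)) ^ ((m:ℝ)⁻¹) :=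
          Real.rpow_le_rpow (by positivity) hBm (by positivity)
      _ = ((A ^ p * B) ^ m) ^ ((m:ℝ)⁻¹) * ((m:ℝ) * D) ^ ((m:ℝ)⁻¹) :=
          Real.mul_rpow (by positivity) hmD
      _ = (A ^ p * B) * ((m:ℝ) * D) ^ ((m:ℝ)⁻¹) := by
          rw [Real.pow_rpow_inv_natCast (by positivity) hm0]
  -- let δ → 0
  have hNpos : (0:ℝ) < (N:ℝ) := by linarith
  have hδseq : Filter.Tendsto (fun j : ℕ => A ^ p * (N:ℝ) ^ ((1:ℝ)/((j:ℝ)+2)))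
      Filter.atTop (nhds (A ^ p)) := by
    have h0 : Filter.Tendsto (fun j : ℕ => (1:ℝ)/((j:ℝ)+2)) Filter.atTop (nhds 0) :=
      tendsto_const_nhds.div_atTop
        (Filter.tendsto_atTop_add_const_right _ 2 tendsto_natCast_atTop_atTop)
    have h1 : Filter.Tendsto (fun j : ℕ => Real.exp (Real.log N * ((1:ℝ)/((j:ℝ)+2))))
        Filter.atTop (nhds 1) := by
      have h2 := (tendsto_const_nhds (x := Real.log N) (f := Filter.atTop (α := ℕ))).mul h0
      rw [mul_zero] at h2
      have := Real.continuous_exp.continuousAt.tendsto.comp h2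
      simpa [Function.comp_def] using this
    have h3 := (tendsto_const_nhds (x := A ^ p) (f := Filter.atTop (α := ℕ))).mul h1
    rw [mul_one] at h3
    apply h3.congr
    intro j
    rw [Real.rpow_def_of_pos hNpos]
  have hfinal : S ≤ A ^ p := by
    apply ge_of_tendsto hδseq
    filter_upwards with j
    have hj2 : (1:ℝ) < (j:ℝ) + 2 := by
      have : (0:ℝ) ≤ (j:ℝ) := Nat.cast_nonneg j
      linarith
    exact key ((1:ℝ)/((j:ℝ)+2)) (by positivity) ((div_lt_one (by linarith)).2 hj2)
  have hfin2 : S ^ ((1:ℝ)/p) ≤ A := by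
    have h4 := Real.rpow_le_rpow hSnn hfinal (by positivity : (0:ℝ) ≤ 1/p)
    rw [one_div, Real.rpow_rpow_inv hA.le hp0.ne'] at h4
    rwa [one_div]
  exact hfin2

lemma pmean_bound (z : ℕ → ℝ) (hz : IsMonoSeq z) (p : ℝ) (hp0 : 0 < p) (K : ℕ)
    (hsup : ∀ k, K ≤ k → z k = 0) (j : ℕ) :
    ((j:ℝ)+1) * z j ^ p ≤ ∑' k : ℕ, z k ^ p := by
  have hSz : ∑' k : ℕ, z k ^ p = ∑ k ∈ Finset.range K, z k ^ p := by
    apply tsum_eq_sum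
    intro k hk
    rw [hsup k (by simpa using hk)]
    exact Real.zero_rpow hp0.ne'
  set n : ℕ := max K (j+1) with hndef
  have h1 : ∑ k ∈ Finset.range K, z k ^ p = ∑ k ∈ Finset.range n, z k ^ p := by
    apply Finset.sum_subset (Finset.range_subset_range.2 (le_max_left _ _))
    intro k hk hk'
    rw [hsup k (by simp at hk'; omega)]
    exact Real.zero_rpow hp0.ne'
  have h2 : ∑ k ∈ Finset.range (j+1), z k ^ p ≤ ∑ k ∈ Finset.range n, z k ^ p := by
    apply Finset.sum_le_sum_of_subset_of_nonneg (Finset.range_subset_range.2 (le_max_right _ _))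
    intro k _ _
    exact Real.rpow_nonneg (hz.2.1 k) p
  have h3 : ((j:ℝ)+1) * z j ^ p = ∑ _k ∈ Finset.range (j+1), z j ^ p := by
    rw [Finset.sum_const, Finset.card_range, nsmul_eq_mul]
    push_cast; ring
  have h4 : ∑ _k ∈ Finset.range (j+1), z j ^ p ≤ ∑ k ∈ Finset.range (j+1), z k ^ p := by
    apply Finset.sum_le_sum
    intro k hk
    exact Real.rpow_le_rpow (hz.2.1 j) (hz.1 (by simp at hk; omega)) hp0.le
  rw [hSz, h1, h3]
  exact le_trans h4 h2

lemma Phi_dyadic (Φ : (ℕ → ℝ) → ℝ)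
    (h_smul : ∀ (c : ℝ), 0 ≤ c → ∀ x : ℕ → ℝ, Φ (fun k => c * x k) = c * Φ x)
    (h_mono : ∀ x y : ℕ → ℝ, IsMonoSeq x → IsMonoSeq y → (∀ k, x k ≤ y k) → Φ x ≤ Φ y)
    (h_norm : Φ (fun k => if k = 0 then 1 else 0) = 1)
    (h_add : ∀ x y : ℕ → ℝ, Φ (x + y) ≤ Φ x + Φ y)
    (z : ℕ → ℝ) (hz : IsMonoSeq z) (R : ℕ) (hsup : ∀ k, 2^R ≤ k → z k = 0) :
    Φ z ≤ ∑ r ∈ Finset.range (R+1), z (2^r - 1) * phiN Φ (2^(r+1)) := by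
  classical
  set g : ℕ → ℕ → ℝ := fun r k => z (2^r - 1) * (if k < 2^(r+1) - 1 then 1 else 0) with hgdef
  have hgnn : ∀ r k, 0 ≤ g r k := by
    intro r k
    apply mul_nonneg (hz.2.1 _)
    by_cases h : k < 2^(r+1) - 1 <;> simp [h]
  set w : ℕ → ℝ := fun k => ∑ r ∈ Finset.range (R+1), g r k with hwdef
  have hwmono : IsMonoSeq w := by
    refine ⟨?_, ?_, 2^(R+1), ?_⟩
    · intro a b hab
      apply Finset.sum_le_sum
      intro r _
      apply mul_le_mul_of_nonneg_left _ (hz.2.1 _)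
      by_cases hb : b < 2^(r+1) - 1
      · simp [hb, lt_of_le_of_lt hab hb]
      · simp only [hb, if_false]
        by_cases ha : a < 2^(r+1) - 1 <;> simp [ha]
    · intro k
      exact Finset.sum_nonneg fun r _ => hgnn r k
    · intro k hk
      apply Finset.sum_eq_zero
      intro r hr
      have hrR : r < R + 1 := Finset.mem_range.1 hr
      have : ¬(k < 2^(r+1) - 1) := by
        have h2 : 2^(r+1) ≤ 2^(R+1) := Nat.pow_le_pow_right (by norm_num) (by omega)
        omega
      simp [hgdef, this]
  have hzw : ∀ k, z k ≤ w k := by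
    intro k
    by_cases hk : k < 2^(R+1) - 1
    · set r : ℕ := Nat.log 2 (k+1) with hrdef
      have hk0 : k + 1 ≠ 0 := by omega
      have hr1 : 2^r ≤ k + 1 := Nat.pow_log_le_self 2 hk0
      have hr2 : k + 1 < 2^(r+1) := Nat.lt_pow_succ_log_self (by norm_num) (k+1)
      have hrR : r < R + 1 := by
        have : k + 1 < 2^(R+1) := by omega
        have := Nat.log_lt_of_lt_pow hk0 this
        omega
      have hterm : z k ≤ g r k := by
        have h1 : k < 2^(r+1) - 1 := by omega
        have h2 : 2^r - 1 ≤ k := by omega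
        simp only [hgdef, h1, if_true, mul_one]
        exact hz.1 h2
      calc z k ≤ g r k := hterm
        _ ≤ w k := Finset.single_le_sum (fun s _ => hgnn s k) (Finset.mem_range.2 hrR)
    · have hk2 : 2^R ≤ k := by
        have : 2^R ≤ 2^(R+1) - 1 := by
          have := Nat.pow_le_pow_right (show 1 ≤ 2 by norm_num) (show R ≤ R+1 by omega)
          have h2 : (1:ℕ) ≤ 2^R := Nat.one_le_two_pow
          omega
        omega
      rw [hsup k hk2]
      exact hwmono.2.1 k
  have h1 : Φ z ≤ Φ w := h_mono z w hz hwmono hzw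
  have h2 : Φ w ≤ ∑ r ∈ Finset.range (R+1), Φ (g r) :=
    Phi_sum_le Φ h_smul h_mono h_norm h_add (Finset.range (R+1)) g
  have h3 : ∀ r, Φ (g r) = z (2^r - 1) * phiN Φ (2^(r+1) - 1) := by
    intro r
    have : g r = fun k => if k < 2^(r+1) - 1 then z (2^r - 1) else 0 := by
      funext k
      by_cases h : k < 2^(r+1) - 1 <;> simp [hgdef, h]
    rw [this]
    exact Phi_const_ind Φ h_smul h_mono h_norm h_add _ (hz.2.1 _) _
  have h4 : ∀ r, Φ (g r) ≤ z (2^r - 1) * phiN Φ (2^(r+1)) := by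
    intro r
    rw [h3 r]
    apply mul_le_mul_of_nonneg_left _ (hz.2.1 _)
    exact phiN_mono Φ h_smul h_mono h_norm h_add _ _ (Nat.sub_le _ _)
  exact le_trans h1 (le_trans h2 (Finset.sum_le_sum fun r _ => h4 r))

set_option maxHeartbeats 2000000 in
lemma aux_lower (Φ : (ℕ → ℝ) → ℝ) (c : ℝ) (hc : 0 < c)
    (h_norm : Φ (fun k => if k = 0 then 1 else 0) = 1)
    (h_add : ∀ x y : ℕ → ℝ, Φ (x + y) ≤ Φ x + Φ y)
    (h_smul : ∀ (c : ℝ), 0 ≤ c → ∀ x : ℕ → ℝ, Φ (fun k => c * x k) = c * Φ x)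
    (h_mono : ∀ x y : ℕ → ℝ, IsMonoSeq x → IsMonoSeq y → (∀ k, x k ≤ y k) → Φ x ≤ Φ y)
    (p : ℝ) (hp : 1 ≤ p)
    (hlim : Filter.Tendsto (fun n : ℕ => Real.log n / Real.log (phiN Φ n))
      Filter.atTop (nhds p))
    (H : ∀ x y z : ℕ → ℝ, IsMonoSeq x → IsMonoSeq y → Antitone z → (∀ k, 0 ≤ z k) →
        IsTensorRearrangement x y z → c * (Φ x * Φ y) ≤ Φ z) :
    ∀ x : ℕ → ℝ, IsMonoSeq x → c * Φ x ≤ (∑' k : ℕ, x k ^ p) ^ (1 / p) := by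
  intro x hx
  have hp0 : (0:ℝ) < p := lt_of_lt_of_le one_pos hp
  have hΦnn : ∀ y : ℕ → ℝ, IsMonoSeq y → 0 ≤ Φ y :=
    Phi_nonneg Φ h_smul h_mono h_norm h_add
  have hφ1 : ∀ n : ℕ, 1 ≤ n → 1 ≤ phiN Φ n :=
    phiN_one_le Φ h_smul h_mono h_norm h_add
  by_cases hx0 : x 0 = 0
  · have hxz : ∀ k, x k = 0 := fun k =>
      le_antisymm (hx0 ▸ hx.1 (Nat.zero_le k)) (hx.2.1 k)
    have hxeq : x = fun _ => 0 := funext hxz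
    rw [hxeq, Phi_zero Φ h_smul h_mono h_norm h_add, mul_zero]
    exact Real.rpow_nonneg (tsum_nonneg fun k => Real.rpow_nonneg le_rfl p) _
  have hx0' : 0 < x 0 := lt_of_le_of_ne (hx.2.1 0) (Ne.symm hx0)
  have hΦx : 0 < Φ x := by
    have h1 := Phi_lower Φ h_smul h_mono h_norm h_add x hx 0
    rw [phiN_one Φ h_smul h_mono h_norm h_add, mul_one] at h1
    exact lt_of_lt_of_le hx0' h1
  obtain ⟨N₀, hN₀⟩ := hx.2.2
  set N : ℕ := N₀ + 1 with hNdef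
  have hNsup : ∀ k, N ≤ k → x k = 0 := fun k hk => hN₀ k (by omega)
  have hN1 : 1 ≤ N := by omega
  have hNr0 : (0:ℝ) ≤ (N:ℝ) := Nat.cast_nonneg N
  set S : ℝ := ∑' k : ℕ, x k ^ p with hSdef
  have hS_eq : S = ∑ k ∈ Finset.range N, x k ^ p := by
    apply tsum_eq_sum
    intro k hk
    rw [hNsup k (by simpa using hk)]
    exact Real.zero_rpow hp0.ne'
  have hSpos : 0 < S := by
    rw [hS_eq]
    have h1 : 0 < x 0 ^ p := Real.rpow_pos_of_pos hx0' p
    have h2 : ∀ k ∈ Finset.range N, 0 ≤ x k ^ p :=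
      fun k _ => Real.rpow_nonneg (hx.2.1 k) p
    calc (0:ℝ) < x 0 ^ p := h1
      _ ≤ _ := Finset.single_le_sum h2 (Finset.mem_range.2 (by omega))
  set T : ℝ := S ^ ((1:ℝ)/p) with hTdef
  have hT : 0 < T := Real.rpow_pos_of_pos hSpos _
  set A : ℝ := c * Φ x with hAdef
  have hA : 0 < A := mul_pos hc hΦx
  have hpow : ∀ m : ℕ, 1 ≤ m → ∃ X : ℕ → ℝ, IsMonoSeq X ∧ (∀ k, N ^ m ≤ k → X k = 0) ∧
      (∑' k : ℕ, X k ^ p) = S ^ m ∧ A ^ m ≤ c * Φ X := by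
    intro m hm
    induction m, hm using Nat.le_induction with
    | base =>
      exact ⟨x, hx, by simpa using hNsup, by rw [pow_one], by rw [pow_one]⟩
    | succ m hm ih =>
      obtain ⟨X, hXmono, hXsup, hXsum, hXΦ⟩ := ih
      obtain ⟨z, hzmono, hzanti, hznn, hzrearr, hzsup, hzsum⟩ :=
        tensor_exists X x hXmono hx (N ^ m) N hXsup hNsup
      refine ⟨z, hzmono, ?_, ?_, ?_⟩
      · intro k hk
        exact hzsup k (by rw [← pow_succ]; exact hk)
      · rw [hzsum p hp0, hXsum, ← hSdef, pow_succ]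
      · have h1 := H X x z hXmono hx hzanti hznn hzrearr
        calc A ^ (m+1) = A ^ m * (c * Φ x) := by rw [pow_succ]
          _ ≤ (c * Φ X) * (c * Φ x) :=
              mul_le_mul_of_nonneg_right hXΦ (mul_nonneg hc.le (hΦnn x hx))
          _ = c * (Φ X * Φ x) * c := by ring
          _ ≤ Φ z * c := mul_le_mul_of_nonneg_right h1 hc.le
          _ = c * Φ z := mul_comm _ _
  have hL := phi_ratio (phiN Φ) p hp hlim
  -- key bound for each η
  have key : ∀ η : ℝ, 0 < η → η < 1 → A ≤ T * (2:ℝ) ^ (η * (N:ℝ) / p) := by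
    intro η hη0 hη1
    have h1 : p⁻¹ < (1 + η)/p := by
      rw [inv_eq_one_div]
      exact div_lt_div_of_pos_right (by linarith) hp0
    have hev : ∀ᶠ n : ℕ in Filter.atTop,
        phiN Φ n ≤ (n:ℝ) ^ ((1 + η)/p) := by
      filter_upwards [hL.eventually (eventually_lt_nhds h1), Filter.eventually_ge_atTop 2]
        with n hn h2n
      have hlogn : 0 < Real.log n := Real.log_pos (by exact_mod_cast h2n)
      have hφpos : (0:ℝ) < phiN Φ n := lt_of_lt_of_le one_pos (hφ1 n (by omega))
      have h2 : Real.log (phiN Φ n) ≤ (1 + η)/p * Real.log n := by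
        calc Real.log (phiN Φ n) = (Real.log (phiN Φ n) / Real.log n) * Real.log n :=
              (div_mul_cancel₀ _ hlogn.ne').symm
          _ ≤ (1 + η)/p * Real.log n := mul_le_mul_of_nonneg_right hn.le hlogn.le
      have hnpos : (0:ℝ) < (n:ℝ) := by positivity
      calc phiN Φ n = Real.exp (Real.log (phiN Φ n)) := (Real.exp_log hφpos).symm
        _ ≤ Real.exp ((1 + η)/p * Real.log n) := Real.exp_le_exp.2 h2
        _ = (n:ℝ) ^ ((1 + η)/p) := by rw [Real.rpow_def_of_pos hnpos, mul_comm]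
    obtain ⟨n₁, hn₁⟩ := Filter.eventually_atTop.1 hev
    set q : ℝ := (1 + η)/p with hqdef
    have hq0 : 0 ≤ q := by positivity
    set C₀ : ℝ := phiN Φ (n₁ + 1) with hC₀def
    have hC₀1 : (1:ℝ) ≤ C₀ := hφ1 _ (by omega)
    have hφub : ∀ n : ℕ, 1 ≤ n → phiN Φ n ≤ C₀ + (n:ℝ) ^ q := by
      intro n hn
      by_cases hcase : n₁ ≤ n
      · have := hn₁ n hcase
        have : phiN Φ n ≤ (n:ℝ) ^ q := this
        linarith
      · have h3 : phiN Φ n ≤ C₀ :=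
          phiN_mono Φ h_smul h_mono h_norm h_add n (n₁ + 1) (by omega)
        have h4 : (0:ℝ) ≤ (n:ℝ) ^ q := Real.rpow_nonneg (Nat.cast_nonneg n) q
        linarith
    set G : ℝ := (2:ℝ) ^ q with hGdef
    have hG1 : (1:ℝ) ≤ G := Real.one_le_rpow (by norm_num) hq0
    set W : ℝ := (2:ℝ) ^ (η * (N:ℝ) / p) with hWdef
    have hW1 : (1:ℝ) ≤ W := Real.one_le_rpow (by norm_num) (by positivity)
    set D : ℝ := max 1 (c * ((N:ℝ) + 1) * (C₀ + G)) with hDdef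
    have hD1 : (1:ℝ) ≤ D := le_max_left _ _
    apply mroot_limit A (T * W) D (by positivity) hD1
    intro m hm
    have hm0 : m ≠ 0 := by omega
    have hmr : (1:ℝ) ≤ (m:ℝ) := by exact_mod_cast hm
    obtain ⟨X, hXmono, hXsup, hXsum, hXΦ⟩ := hpow m hm
    set R : ℕ := N * m with hRdef
    have hXsup2 : ∀ k, 2 ^ R ≤ k → X k = 0 := by
      intro k hk
      apply hXsup
      calc N ^ m ≤ (2 ^ N) ^ m := Nat.pow_le_pow_left Nat.lt_two_pow_self.le m
        _ = 2 ^ R := by rw [← pow_mul]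
      omega
    have hTm : (S ^ m : ℝ) ^ ((1:ℝ)/p) = T ^ m := by
      rw [hTdef, ← Real.rpow_natCast S m, ← Real.rpow_mul hSpos.le,
        ← Real.rpow_natCast (S ^ ((1:ℝ)/p)) m, ← Real.rpow_mul hSpos.le]
      ring_nf
    have hzr : ∀ r : ℕ, X (2^r - 1) ≤ T ^ m * ((2:ℝ) ^ (r:ℝ)) ^ (-(1/p)) := by
      intro r
      have h2r1 : (1:ℕ) ≤ 2^r := Nat.one_le_two_pow
      have hcast : ((2^r - 1 : ℕ):ℝ) + 1 = (2:ℝ) ^ (r:ℝ) := by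
        rw [Nat.cast_sub h2r1]
        push_cast
        rw [Real.rpow_natCast]
        ring
      have hpm := pmean_bound X hXmono p hp0 (N^m) hXsup (2^r - 1)
      rw [hXsum, hcast] at hpm
      have h2rpos : (0:ℝ) < (2:ℝ) ^ (r:ℝ) := Real.rpow_pos_of_pos (by norm_num) _
      have h5 : X (2^r - 1) ^ p ≤ S ^ m / (2:ℝ) ^ (r:ℝ) := by
        rw [le_div_iff₀ h2rpos]
        calc X (2^r-1)^p * (2:ℝ)^(r:ℝ) = (2:ℝ)^(r:ℝ) * X (2^r-1)^p := mul_comm _ _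
          _ ≤ S ^ m := hpm
      have h6 : X (2^r - 1) = (X (2^r - 1) ^ p) ^ ((1:ℝ)/p) := by
        rw [one_div, Real.rpow_rpow_inv (hXmono.2.1 _) hp0.ne']
      rw [h6]
      calc (X (2^r-1)^p)^((1:ℝ)/p) ≤ (S^m / (2:ℝ)^(r:ℝ))^((1:ℝ)/p) :=
          Real.rpow_le_rpow (Real.rpow_nonneg (hXmono.2.1 _) p) h5 (by positivity)
        _ = T^m * ((2:ℝ)^(r:ℝ))^(-(1/p)) := by
            rw [Real.div_rpow (by positivity) h2rpos.le, hTm, Real.rpow_neg h2rpos.le,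
              div_eq_mul_inv]
    have hdyadic := Phi_dyadic Φ h_smul h_mono h_norm h_add X hXmono R hXsup2
    set V : ℝ := (2:ℝ) ^ (η * (R:ℝ) / p) with hVdef
    have hterm : ∀ r ∈ Finset.range (R+1),
        X (2^r - 1) * phiN Φ (2^(r+1)) ≤ T^m * (C₀ + G * V) := by
      intro r hr
      have hrR : (r:ℝ) ≤ (R:ℝ) := by
        have : r ≤ R := by simpa [Nat.lt_succ_iff] using Finset.mem_range.1 hr
        exact_mod_cast this
      have hcast2 : ((2^(r+1) : ℕ):ℝ) = (2:ℝ) ^ ((r:ℝ)+1) := by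
        push_cast
        rw [← Real.rpow_natCast (2:ℝ) (r+1)]
        push_cast
        ring_nf
      have hφr : phiN Φ (2^(r+1)) ≤ C₀ + ((2:ℝ) ^ ((r:ℝ)+1)) ^ q := by
        have := hφub (2^(r+1)) Nat.one_le_two_pow
        rwa [hcast2] at this
      have hZnn : (0:ℝ) ≤ T^m * ((2:ℝ)^(r:ℝ))^(-(1/p)) := by positivity
      have hφnn : (0:ℝ) ≤ phiN Φ (2^(r+1)) :=
        le_trans zero_le_one (hφ1 _ Nat.one_le_two_pow)
      have h9 : X (2^r - 1) * phiN Φ (2^(r+1)) ≤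
          (T^m * ((2:ℝ)^(r:ℝ))^(-(1/p))) * (C₀ + ((2:ℝ) ^ ((r:ℝ)+1)) ^ q) :=
        mul_le_mul (hzr r) hφr hφnn hZnn
      have hZ1 : ((2:ℝ)^(r:ℝ))^(-(1/p)) ≤ 1 := by
        apply Real.rpow_le_one_of_one_le_of_nonpos
        · exact Real.one_le_rpow (by norm_num) (Nat.cast_nonneg r)
        · rw [neg_nonpos]; positivity
      have hZ0 : (0:ℝ) ≤ ((2:ℝ)^(r:ℝ))^(-(1/p)) := by positivity
      have hprod : ((2:ℝ)^(r:ℝ))^(-(1/p)) * ((2:ℝ) ^ ((r:ℝ)+1)) ^ q ≤ G * V := by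
        rw [← Real.rpow_mul (by norm_num : (0:ℝ) ≤ 2), ← Real.rpow_mul (by norm_num : (0:ℝ) ≤ 2),
          ← Real.rpow_add (by norm_num : (0:ℝ) < 2)]
        rw [hGdef, hVdef, ← Real.rpow_add (by norm_num : (0:ℝ) < 2)]
        apply Real.rpow_le_rpow_of_exponent_le (by norm_num)
        have hnum : (1:ℝ) + η*((r:ℝ)+1) ≤ 1 + η*((R:ℝ)+1) := by nlinarith
        have e1 : (r:ℝ) * -(1/p) + ((r:ℝ)+1)*q = (1 + η*((r:ℝ)+1))/p := by
          rw [hqdef]; field_simp; ring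
        have e2 : q + η*(R:ℝ)/p = (1 + η*((R:ℝ)+1))/p := by
          rw [hqdef]; field_simp; ring
        rw [e1, e2]
        exact (div_le_div_iff_of_pos_right hp0).2 hnum
      calc X (2^r - 1) * phiN Φ (2^(r+1))
          ≤ (T^m * ((2:ℝ)^(r:ℝ))^(-(1/p))) * (C₀ + ((2:ℝ) ^ ((r:ℝ)+1)) ^ q) := h9
        _ = T^m * (((2:ℝ)^(r:ℝ))^(-(1/p)) * C₀ +
              ((2:ℝ)^(r:ℝ))^(-(1/p)) * ((2:ℝ) ^ ((r:ℝ)+1)) ^ q) := by ring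
        _ ≤ T^m * (C₀ + G * V) := by
            apply mul_le_mul_of_nonneg_left _ (by positivity)
            have h10 : ((2:ℝ)^(r:ℝ))^(-(1/p)) * C₀ ≤ C₀ := by nlinarith
            linarith [hprod]
    have hsum : ∑ r ∈ Finset.range (R+1), X (2^r - 1) * phiN Φ (2^(r+1))
        ≤ ((R:ℝ)+1) * (T^m * (C₀ + G*V)) := by
      have h11 := Finset.sum_le_card_nsmul (Finset.range (R+1)) _ (T^m * (C₀ + G*V)) hterm
      rw [Finset.card_range, nsmul_eq_mul] at h11
      calc ∑ r ∈ Finset.range (R+1), X (2^r - 1) * phiN Φ (2^(r+1))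
          ≤ ((R+1 : ℕ):ℝ) * (T^m * (C₀ + G*V)) := h11
        _ = ((R:ℝ)+1) * (T^m * (C₀ + G*V)) := by push_cast; ring
    have hVW : V = W^m := by
      rw [hVdef, hWdef, ← Real.rpow_natCast ((2:ℝ) ^ (η * (N:ℝ) / p)) m,
        ← Real.rpow_mul (by norm_num : (0:ℝ) ≤ 2)]
      congr 1
      rw [hRdef]
      push_cast
      ring
    have hTmnn : (0:ℝ) ≤ T^m := by positivity
    have hWm1 : (1:ℝ) ≤ W^m := one_le_pow₀ hW1
    have step1 : C₀ + G*W^m ≤ W^m*(C₀+G) := by nlinarith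
    have step2 : ((R:ℝ)+1) ≤ (m:ℝ)*((N:ℝ)+1) := by
      have hRcast : (R:ℝ) = (N:ℝ)*(m:ℝ) := by rw [hRdef]; push_cast; ring
      rw [hRcast]; nlinarith
    have hDq : c*((N:ℝ)+1)*(C₀+G) ≤ D := le_max_right _ _
    have hAm : A^m ≤ (T*W)^m * ((m:ℝ)*D) := by
      have h12 : A^m ≤ c * (((R:ℝ)+1) * (T^m * (C₀ + G*W^m))) := by
        rw [← hVW]
        calc A^m ≤ c * Φ X := hXΦ
          _ ≤ c * (((R:ℝ)+1) * (T^m * (C₀ + G*V))) :=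
              mul_le_mul_of_nonneg_left (le_trans hdyadic hsum) hc.le
      have h13 : c * (((R:ℝ)+1) * (T^m * (C₀ + G*W^m)))
          ≤ c * (((m:ℝ)*((N:ℝ)+1)) * (T^m * (W^m*(C₀+G)))) := by
        apply mul_le_mul_of_nonneg_left _ hc.le
        apply mul_le_mul step2 (mul_le_mul_of_nonneg_left step1 hTmnn)
          (by positivity) (by positivity)
      have h14 : c * (((m:ℝ)*((N:ℝ)+1)) * (T^m * (W^m*(C₀+G))))
          = T^m*W^m*((m:ℝ)*(c*((N:ℝ)+1)*(C₀+G))) := by ring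
      have h15 : T^m*W^m*((m:ℝ)*(c*((N:ℝ)+1)*(C₀+G))) ≤ T^m*W^m*((m:ℝ)*D) := by
        apply mul_le_mul_of_nonneg_left _ (by positivity)
        apply mul_le_mul_of_nonneg_left hDq (by positivity)
      have h16 : T^m*W^m*((m:ℝ)*D) = (T*W)^m * ((m:ℝ)*D) := by rw [mul_pow]
      exact le_trans h12 (le_trans h13 (le_trans (le_of_eq h14) (le_trans h15 (le_of_eq h16))))
    have hmD : (0:ℝ) ≤ (m:ℝ) * D := by positivity
    calc A = (A ^ m) ^ ((m:ℝ)⁻¹) := (Real.pow_rpow_inv_natCast hA.le hm0).symm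
      _ ≤ ((T*W) ^ m * ((m:ℝ) * D)) ^ ((m:ℝ)⁻¹) :=
          Real.rpow_le_rpow (by positivity) hAm (by positivity)
      _ = ((T*W) ^ m) ^ ((m:ℝ)⁻¹) * ((m:ℝ) * D) ^ ((m:ℝ)⁻¹) :=
          Real.mul_rpow (by positivity) hmD
      _ = (T*W) * ((m:ℝ) * D) ^ ((m:ℝ)⁻¹) := by
          rw [Real.pow_rpow_inv_natCast (by positivity) hm0]
  -- let η → 0
  have hηseq : Filter.Tendsto (fun j : ℕ => T * (2:ℝ) ^ (((1:ℝ)/((j:ℝ)+2)) * (N:ℝ) / p))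
      Filter.atTop (nhds T) := by
    have h0 : Filter.Tendsto (fun j : ℕ => (1:ℝ)/((j:ℝ)+2)) Filter.atTop (nhds 0) :=
      tendsto_const_nhds.div_atTop
        (Filter.tendsto_atTop_add_const_right _ 2 tendsto_natCast_atTop_atTop)
    have h0' : Filter.Tendsto (fun j : ℕ => ((1:ℝ)/((j:ℝ)+2)) * (N:ℝ) / p)
        Filter.atTop (nhds 0) := by
      have := (h0.mul_const (N:ℝ)).div_const p
      simpa using this
    have h1 : Filter.Tendsto
        (fun j : ℕ => Real.exp (Real.log 2 * (((1:ℝ)/((j:ℝ)+2)) * (N:ℝ) / p)))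
        Filter.atTop (nhds 1) := by
      have h2 := (tendsto_const_nhds (x := Real.log 2) (f := Filter.atTop (α := ℕ))).mul h0'
      rw [mul_zero] at h2
      have := Real.continuous_exp.continuousAt.tendsto.comp h2
      simpa [Function.comp_def] using this
    have h3 := (tendsto_const_nhds (x := T) (f := Filter.atTop (α := ℕ))).mul h1
    rw [mul_one] at h3
    apply h3.congr
    intro j
    rw [Real.rpow_def_of_pos (by norm_num : (0:ℝ) < 2)]
  have hfinal : A ≤ T := by
    apply ge_of_tendsto hηseq
    filter_upwards with j
    have hj2 : (1:ℝ) < (j:ℝ) + 2 := by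
      have : (0:ℝ) ≤ (j:ℝ) := Nat.cast_nonneg j
      linarith
    exact key ((1:ℝ)/((j:ℝ)+2)) (by positivity) ((div_lt_one (by linarith)).2 hj2)
  exact hfinal

/-- sequence-level version.  Let Φ be a symmetric norming function on
(finitely supported, nonincreasing, nonnegative) sequences and let
p = lim (log n)/(log Φ(1,…,1 (n ones))).  If Φ satisfies (∗) with constant c₁ then
‖x‖_{ℓ^p} ≤ c₁·Φ(x); if Φ satisfies (∗∗) with constant c₂ then c₂·Φ(x) ≤ ‖x‖_{ℓ^p};
and if Φ is a cross norm (both with c₁ = c₂ = 1) then Φ = Φ_p. -/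
theorem stmt_19 (Φ : (ℕ → ℝ) → ℝ) (c₁ c₂ : ℝ) (hc₁ : 0 < c₁) (hc₂ : 0 < c₂)
    (h_norm : Φ (fun k => if k = 0 then 1 else 0) = 1)
    (h_add : ∀ x y : ℕ → ℝ, Φ (x + y) ≤ Φ x + Φ y)
    (h_smul : ∀ (c : ℝ), 0 ≤ c → ∀ x : ℕ → ℝ, Φ (fun k => c * x k) = c * Φ x)
    (h_mono : ∀ x y : ℕ → ℝ, IsMonoSeq x → IsMonoSeq y → (∀ k, x k ≤ y k) → Φ x ≤ Φ y)
    (p : ℝ) (hp : 1 ≤ p)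
    (hlim : Filter.Tendsto
      (fun n : ℕ => Real.log n / Real.log (Φ (fun k => if k < n then 1 else 0)))
      Filter.atTop (nhds p)) :
    ((∀ x y z : ℕ → ℝ, IsMonoSeq x → IsMonoSeq y → Antitone z → (∀ k, 0 ≤ z k) →
        IsTensorRearrangement x y z → Φ z ≤ c₁ * Φ x * Φ y) →
      ∀ x : ℕ → ℝ, IsMonoSeq x → (∑' k : ℕ, x k ^ p) ^ (1 / p) ≤ c₁ * Φ x)
    ∧ ((∀ x y z : ℕ → ℝ, IsMonoSeq x → IsMonoSeq y → Antitone z → (∀ k, 0 ≤ z k) →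
        IsTensorRearrangement x y z → c₂ * (Φ x * Φ y) ≤ Φ z) →
      ∀ x : ℕ → ℝ, IsMonoSeq x → c₂ * Φ x ≤ (∑' k : ℕ, x k ^ p) ^ (1 / p))
    ∧ ((∀ x y z : ℕ → ℝ, IsMonoSeq x → IsMonoSeq y → Antitone z → (∀ k, 0 ≤ z k) →
        IsTensorRearrangement x y z → Φ z = Φ x * Φ y) →
      ∀ x : ℕ → ℝ, IsMonoSeq x → Φ x = (∑' k : ℕ, x k ^ p) ^ (1 / p)) := by
  refine ⟨?_, ?_, ?_⟩
  · intro H x hx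
    exact aux_upper Φ c₁ hc₁ h_norm h_add h_smul h_mono p hp hlim H x hx
  · intro H x hx
    exact aux_lower Φ c₂ hc₂ h_norm h_add h_smul h_mono p hp hlim H x hx
  · intro H x hx
    have h1 := aux_upper Φ 1 one_pos h_norm h_add h_smul h_mono p hp hlim
      (fun a b z ha hb hz hznn hr => le_of_eq (by rw [H a b z ha hb hz hznn hr]; ring)) x hx
    have h2 := aux_lower Φ 1 one_pos h_norm h_add h_smul h_mono p hp hlim
      (fun a b z ha hb hz hznn hr => le_of_eq (by rw [H a b z ha hb hz hznn hr, one_mul])) x hx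
    rw [one_mul] at h1 h2
    linarith
end
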